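/- arXiv:1511.03554 — 6 statements merged into one kernel-verified Lean document; each statement's English description precedes it below -/
import Mathlib

section
/- Let d ≥ 1. For every biquadratic form BQ in d+d variables satisfying BQ(x,y) ≥ 0 for all x, y ∈ ℝ^d and BQ(x,x) = 0 for all x ∈ ℝ^d, there exists a unique map c ∈ C_+ such that BQ(x,y) = y^⊤ c(x) y for all x, y ∈ ℝ^d. (Thus C_+ is in one-to-one correspondence with the set of nonnegative biquadratic forms vanishing on the diagonal.) -/
open Matrix

/-- A function `ℝ^d → ℝ` is (the evaluation of) a homogeneous polynomial of degree `k`. -/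
def IsHomPolyFun (d k : ℕ) (f : (Fin d → ℝ) → ℝ) : Prop :=
  ∃ P : MvPolynomial (Fin d) ℝ, P.IsHomogeneous k ∧ ∀ x, f x = MvPolynomial.eval x P

namespace Stmt1Aux

lemma single_dot_mulVec {d : ℕ} (A : Matrix (Fin d) (Fin d) ℝ) (i j : Fin d) :
    (Pi.single i 1 : Fin d → ℝ) ⬝ᵥ A.mulVec (Pi.single j 1) = A i j := by
  simp [Matrix.mulVec_single, single_dotProduct]

lemma dot_transpose {d : ℕ} (A : Matrix (Fin d) (Fin d) ℝ) (y : Fin d → ℝ) :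
    y ⬝ᵥ Aᵀ.mulVec y = y ⬝ᵥ A.mulVec y := by
  rw [Matrix.mulVec_transpose, dotProduct_comm, dotProduct_mulVec]

lemma quadForm_isHomPolyFun {d : ℕ} (A : Matrix (Fin d) (Fin d) ℝ) :
    IsHomPolyFun d 2 (fun x => x ⬝ᵥ A.mulVec x) := by
  refine ⟨∑ i, ∑ j, MvPolynomial.C (A i j) * MvPolynomial.X i * MvPolynomial.X j, ?_, ?_⟩
  · apply MvPolynomial.IsHomogeneous.sum
    intro i _
    apply MvPolynomial.IsHomogeneous.sum
    intro j _
    have h : (0 + 1 + 1 : ℕ) = 2 := rfl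
    exact h ▸ ((MvPolynomial.isHomogeneous_C _ _).mul
      (MvPolynomial.isHomogeneous_X _ _)).mul (MvPolynomial.isHomogeneous_X _ _)
  · intro x
    simp only [map_sum, _root_.map_mul, MvPolynomial.eval_C, MvPolynomial.eval_X, dotProduct,
      Matrix.mulVec, Finset.mul_sum]
    refine Finset.sum_congr rfl fun i _ => Finset.sum_congr rfl fun j _ => by ring

lemma kernel_lemma {d : ℕ} (A : Matrix (Fin d) (Fin d) ℝ) (hsymm : A.IsSymm)
    (hpsd : ∀ y : Fin d → ℝ, 0 ≤ y ⬝ᵥ A.mulVec y) (x : Fin d → ℝ)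
    (hx : x ⬝ᵥ A.mulVec x = 0) : A.mulVec x = 0 := by
  funext i
  show A.mulVec x i = 0
  set v : Fin d → ℝ := Pi.single i 1 with hv
  set a : ℝ := A.mulVec x i with ha
  set q : ℝ := v ⬝ᵥ A.mulVec v with hqdef
  have hq : 0 ≤ q := hpsd v
  have hva : v ⬝ᵥ A.mulVec x = a := by
    simp [hv, ha, single_dotProduct]
  have hxv : x ⬝ᵥ A.mulVec v = a := by
    rw [dotProduct_mulVec, ← Matrix.mulVec_transpose, hsymm]
    simp [hv, ha, dotProduct_single]
  have key : ∀ t : ℝ, 0 ≤ 2 * t * a + t ^ 2 * q := by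
    intro t
    have h := hpsd (x + t • v)
    have hexp : (x + t • v) ⬝ᵥ A.mulVec (x + t • v) = 2 * t * a + t ^ 2 * q := by
      simp only [Matrix.mulVec_add, Matrix.mulVec_smul, dotProduct_add, add_dotProduct,
        dotProduct_smul, smul_dotProduct, smul_eq_mul, hx, hva, hxv]
      ring
    rw [hexp] at h
    exact h
  by_contra h
  have ha2 : 0 < a ^ 2 := by positivity
  have hq1 : (0:ℝ) < q + 1 := by linarith
  have ht := key (-a / (q + 1))
  have heq : 2 * (-a / (q + 1)) * a + (-a / (q + 1)) ^ 2 * q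
      = -(a ^ 2 * (q + 2)) / (q + 1) ^ 2 := by field_simp; ring
  rw [heq] at ht
  have hlt : -(a ^ 2 * (q + 2)) / (q + 1) ^ 2 < 0 := by
    apply div_neg_of_neg_of_pos
    · nlinarith
    · positivity
  linarith

end Stmt1Aux

open Stmt1Aux in
/-- Every nonnegative biquadratic form `BQ` in `d+d` variables vanishing on
the diagonal corresponds, via `BQ(x,y) = yᵀ c(x) y`, to a unique `c ∈ C_+`, i.e. a unique map
`c : ℝ^d → S^d` with homogeneous degree-2 polynomial entries, `c(x) x = 0` for all `x`, and
`c(x)` positive semidefinite for all `x`. -/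
theorem stmt1 (d : ℕ) (hd : 1 ≤ d)
    (BQ : (Fin d → ℝ) → (Fin d → ℝ) → ℝ)
    -- `BQ` is a quadratic form in `x` for each fixed `y`:
    (hquadx : ∀ y : Fin d → ℝ, ∃ M : Matrix (Fin d) (Fin d) ℝ,
      ∀ x, BQ x y = x ⬝ᵥ M.mulVec x)
    -- `BQ` is a quadratic form in `y` for each fixed `x`:
    (hquady : ∀ x : Fin d → ℝ, ∃ M : Matrix (Fin d) (Fin d) ℝ,
      ∀ y, BQ x y = y ⬝ᵥ M.mulVec y)
    (hnonneg : ∀ x y, 0 ≤ BQ x y)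
    (hdiag : ∀ x, BQ x x = 0) :
    ∃! c : (Fin d → ℝ) → Matrix (Fin d) (Fin d) ℝ,
      ((∀ i j, IsHomPolyFun d 2 (fun x => c x i j)) ∧
        (∀ x, (c x).IsSymm) ∧
        (∀ x, (c x).mulVec x = 0) ∧
        (∀ x, ∀ y : Fin d → ℝ, 0 ≤ y ⬝ᵥ (c x).mulVec y)) ∧
      (∀ x y, BQ x y = y ⬝ᵥ (c x).mulVec y) := by
  set e : Fin d → (Fin d → ℝ) := fun i => Pi.single i 1 with he
  set c : (Fin d → ℝ) → Matrix (Fin d) (Fin d) ℝ :=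
    fun x => Matrix.of fun i j =>
      (BQ x (e i + e j) - BQ x (e i) - BQ x (e j)) / 2 with hc
  -- `c x` is half the symmetrized matrix of any representing matrix for `BQ x ·`
  have hcM : ∀ x, ∀ M : Matrix (Fin d) (Fin d) ℝ, (∀ y, BQ x y = y ⬝ᵥ M.mulVec y) →
      ∀ i j, c x i j = (M i j + M j i) / 2 := by
    intro x M hM i j
    show (BQ x (e i + e j) - BQ x (e i) - BQ x (e j)) / 2 = (M i j + M j i) / 2
    rw [hM, hM, hM]
    simp only [he, Matrix.mulVec_add, dotProduct_add, add_dotProduct, single_dot_mulVec]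
    ring
  -- the representation property
  have hrep : ∀ x y, BQ x y = y ⬝ᵥ (c x).mulVec y := by
    intro x y
    obtain ⟨M, hM⟩ := hquady x
    have hcx : c x = (1/2 : ℝ) • (M + Mᵀ) := by
      ext i j
      rw [hcM x M hM i j]
      simp [Matrix.transpose_apply]
      ring
    rw [hcx, Matrix.smul_mulVec, dotProduct_smul, Matrix.add_mulVec, dotProduct_add,
      dot_transpose, hM y, smul_eq_mul]
    ring
  -- symmetry
  have hsymm : ∀ x, (c x).IsSymm := by
    intro x
    ext i j
    show c x j i = c x i j
    obtain ⟨M, hM⟩ := hquady x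
    rw [hcM x M hM, hcM x M hM]
    ring
  -- positive semidefiniteness
  have hpsd : ∀ x, ∀ y : Fin d → ℝ, 0 ≤ y ⬝ᵥ (c x).mulVec y := by
    intro x y
    rw [← hrep]
    exact hnonneg x y
  refine ⟨c, ⟨⟨?_, hsymm, ?_, hpsd⟩, hrep⟩, ?_⟩
  · -- entries are homogeneous degree-2 polynomials
    intro i j
    obtain ⟨N₁, hN₁⟩ := hquadx (e i + e j)
    obtain ⟨N₂, hN₂⟩ := hquadx (e i)
    obtain ⟨N₃, hN₃⟩ := hquadx (e j)
    obtain ⟨P, hP, hPeval⟩ := quadForm_isHomPolyFun ((1/2 : ℝ) • (N₁ - N₂ - N₃))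
    refine ⟨P, hP, fun x => ?_⟩
    rw [← hPeval x]
    show (BQ x (e i + e j) - BQ x (e i) - BQ x (e j)) / 2 = _
    rw [hN₁, hN₂, hN₃]
    simp only [Matrix.smul_mulVec, dotProduct_smul, Matrix.sub_mulVec, dotProduct_sub,
      smul_eq_mul]
    ring
  · -- `c x` kills `x`
    intro x
    apply kernel_lemma (c x) (hsymm x) (hpsd x)
    rw [← hrep x x, hdiag x]
  · -- uniqueness
    intro c' ⟨⟨_, hsymm', _, _⟩, hrep'⟩
    funext x
    ext i j
    have hsij : c' x j i = c' x i j := by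
      have := hsymm' x
      rw [Matrix.IsSymm] at this
      calc c' x j i = (c' x)ᵀ i j := rfl
        _ = c' x i j := by rw [this]
    have hM' : ∀ y, BQ x y = y ⬝ᵥ (c' x).mulVec y := hrep' x
    rw [hcM x (c' x) hM' i j, hsij]
    ring
end

section
/- Let d ≥ 1 and m = binomial(d,2). For every map c : ℝ^d → S^d whose entries are homogeneous polynomials of degree 2 and which satisfies c(x) x = 0 for all x ∈ ℝ^d, there exists a symmetric m×m matrix H = (h_{pq}) such that c(x) = Σ_{p,q=1}^m h_{pq} D_p x x^⊤ D_q^⊤ for all x ∈ ℝ^d. That is, C = { c_H : H ∈ S^m }. -/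
open Matrix

/-- The index set of pairs `(i,j)` with `i < j`; it has cardinality `d.choose 2`
and corresponds to the lexicographic enumeration `D_1, …, D_m` used in the paper. -/
abbrev PairIdx (d : ℕ) := {p : Fin d × Fin d // p.1 < p.2}

/-- The elementary skew-symmetric matrix `S_{ij} = e_i e_jᵀ - e_j e_iᵀ`. -/
noncomputable def skewBasis {d : ℕ} (p : PairIdx d) : Matrix (Fin d) (Fin d) ℝ :=
  Matrix.single p.1.1 p.1.2 1 - Matrix.single p.1.2 p.1.1 1

/-- `c_H(x) = ∑_{p,q} h_{pq} D_p x xᵀ D_qᵀ`. -/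
noncomputable def cH {d : ℕ} (H : Matrix (PairIdx d) (PairIdx d) ℝ) (x : Fin d → ℝ) :
    Matrix (Fin d) (Fin d) ℝ :=
  ∑ p : PairIdx d, ∑ q : PairIdx d,
    H p q • (skewBasis p * Matrix.vecMulVec x x * (skewBasis q)ᵀ)

open Finset

noncomputable def eb {d : ℕ} (k : Fin d) : Fin d → ℝ := fun t => if t = k then 1 else 0

lemma finsupp_deg_two {d : ℕ} (s : Fin d →₀ ℕ) (h : s.degree = 2) :
    ∃ a b : Fin d, s = Finsupp.single a 1 + Finsupp.single b 1 := by
  classical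
  have hne : s ≠ 0 := by
    intro h0; rw [h0] at h; simp [map_zero] at h
  obtain ⟨a, ha⟩ := Finsupp.ne_iff.mp hne
  simp only [Finsupp.coe_zero, Pi.zero_apply] at ha
  have has : a ∈ s.support := Finsupp.mem_support_iff.mpr ha
  have hsum : ∀ t : Finset (Fin d), t ⊆ s.support → ∑ i ∈ t, s i ≤ 2 := by
    intro t ht
    rw [← h]
    exact Finset.sum_le_sum_of_subset ht
  by_cases h2 : s a ≥ 2
  · -- s = single a 2
    refine ⟨a, a, ?_⟩
    have hsa : s a = 2 := by
      have := hsum {a} (by simpa using has); simp at this; omega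
    ext c
    by_cases hc : c = a
    · subst hc; simp [hsa]
    · have hc0 : s c = 0 := by
        by_contra hc0
        have hcs : c ∈ s.support := Finsupp.mem_support_iff.mpr hc0
        have := hsum {a, c} (by intro z hz; simp at hz; rcases hz with h|h <;> simp [h, has, hcs])
        rw [Finset.sum_pair (fun hh => hc hh.symm)] at this
        omega
      simp [hc0, Finsupp.single_apply, hc, Ne.symm]
  · have hsa : s a = 1 := by omega
    -- there is another element
    have hrest : ∑ i ∈ s.support \ {a}, s i = 1 := by
      have : s.degree = s a + ∑ i ∈ s.support \ {a}, s i := by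
        rw [Finsupp.degree_apply]
        rw [← Finset.sum_sdiff (by simpa using has : ({a} : Finset (Fin d)) ⊆ s.support)]
        rw [Finset.sum_singleton]; ring
      omega
    have hbne : (s.support \ {a}).Nonempty := by
      by_contra hb
      rw [Finset.not_nonempty_iff_eq_empty] at hb
      rw [hb] at hrest; simp at hrest
    obtain ⟨b, hb⟩ := hbne
    have hba : b ≠ a := by simp at hb; exact hb.2
    have hbsup : b ∈ s.support := (Finset.mem_sdiff.mp hb).1
    have hsb1 : s b ≥ 1 := by
      have := Finsupp.mem_support_iff.mp hbsup; omega
    have hsb : s b = 1 := by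
      have := hsum {a, b} (by intro z hz; simp at hz; rcases hz with h|h <;> simp [h, has, hbsup])
      rw [Finset.sum_pair (Ne.symm hba)] at this
      omega
    refine ⟨a, b, ?_⟩
    ext c
    by_cases hca : c = a
    · subst hca; simp [hsa, Finsupp.single_apply, hba]
    · by_cases hcb : c = b
      · subst hcb; simp [hsb, Finsupp.single_apply, hca, Ne.symm hca]
      · have hc0 : s c = 0 := by
          by_contra hc0
          have hcs : c ∈ s.support := Finsupp.mem_support_iff.mpr hc0
          have := hsum {a, b, c} (by intro z hz; simp at hz; rcases hz with h|h|h <;> simp [h, has, hbsup, hcs])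
          rw [Finset.sum_insert (by simp [Ne.symm hba, hca ∘ Eq.symm]; exact fun hh => hca hh.symm)] at this
          · rw [Finset.sum_pair (fun hh => hcb (hh.symm))] at this
            omega
        simp [hc0, Finsupp.single_apply, Ne.symm hca, Ne.symm hcb]

lemma sumCollapse {d : ℕ} (a : Fin d) (g : Fin d → ℝ) :
    ∑ k : Fin d, (if a = k then (1:ℝ) else 0) * g k = g a := by
  simp [ite_mul]

lemma inner_collapse {d : ℕ} (a b : Fin d) (x : Fin d → ℝ) :
    ∑ k : Fin d, ∑ l : Fin d,
      (((eb k + eb l) a * (eb k + eb l) b - eb k a * eb k b - eb l a * eb l b)/2) * x k * x l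
      = x a * x b := by
  have step : ∀ k l : Fin d,
      (((eb k + eb l) a * (eb k + eb l) b - eb k a * eb k b - eb l a * eb l b)/2) * x k * x l
      = (1/2) * ((if a = k then (1:ℝ) else 0) * ((if b = l then (1:ℝ) else 0) * (x k * x l)))
        + (1/2) * ((if a = l then (1:ℝ) else 0) * ((if b = k then (1:ℝ) else 0) * (x k * x l))) := by
    intro k l
    simp only [eb, Pi.add_apply]
    split_ifs <;> ring
  simp only [step, Finset.sum_add_distrib]
  simp only [← Finset.mul_sum]
  have e1 : ∑ i : Fin d, (if a = i then (1:ℝ) else 0) *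
      (∑ i1 : Fin d, (if b = i1 then (1:ℝ) else 0) * (x i * x i1)) = x a * x b := by
    refine (Finset.sum_congr rfl fun i _ => ?_).trans (sumCollapse a (fun i => x i * x b))
    congr 1
    exact sumCollapse b (fun t => x i * x t)
  have e2 : ∑ k : Fin d, ∑ l : Fin d,
      (if a = l then (1:ℝ) else 0) * ((if b = k then (1:ℝ) else 0) * (x k * x l)) = x b * x a := by
    rw [Finset.sum_comm]
    refine (Finset.sum_congr rfl fun y _ => ?_).trans (sumCollapse a (fun y => x b * x y))
    rw [← Finset.mul_sum]
    congr 1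
    exact sumCollapse b (fun t => x t * x y)
  rw [e1, e2]; ring

lemma quad_rep {d : ℕ} {f : (Fin d → ℝ) → ℝ} (hf : IsHomPolyFun d 2 f) (x : Fin d → ℝ) :
    f x = ∑ k : Fin d, ∑ l : Fin d,
      ((f (eb k + eb l) - f (eb k) - f (eb l))/2) * x k * x l := by
  classical
  obtain ⟨P, hP, hfP⟩ := hf
  have hmem : ∀ s ∈ P.support, ∃ ab : Fin d × Fin d,
      s = Finsupp.single ab.1 1 + Finsupp.single ab.2 1 := by
    intro s hs
    have hdeg : s.degree = 2 := by
      by_contra hdeg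
      exact (MvPolynomial.mem_support_iff.mp hs) (hP.coeff_eq_zero hdeg)
    obtain ⟨a, b, hab⟩ := finsupp_deg_two s hdeg
    exact ⟨(a, b), hab⟩
  choose A hA using hmem
  have evalmon : ∀ (a b : Fin d) (r : ℝ) (y : Fin d → ℝ),
      MvPolynomial.eval y (MvPolynomial.monomial (Finsupp.single a 1 + Finsupp.single b 1) r)
        = r * (y a * y b) := by
    intro a b r y
    rw [MvPolynomial.eval_monomial,
      Finsupp.prod_add_index (by simp) (by intro z _ e1 e2; rw [pow_add]),
      Finsupp.prod_single_index (by simp), Finsupp.prod_single_index (by simp),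
      pow_one, pow_one]
  have hdec : ∀ y : Fin d → ℝ, f y = ∑ s ∈ P.support.attach,
      MvPolynomial.coeff s.1 P * (y (A s.1 s.2).1 * y (A s.1 s.2).2) := by
    intro y
    rw [hfP]
    conv_lhs => rw [P.as_sum]
    rw [map_sum, ← Finset.sum_attach P.support
      (fun s => MvPolynomial.eval y (MvPolynomial.monomial s (MvPolynomial.coeff s P)))]
    refine Finset.sum_congr rfl fun s _ => ?_
    rw [show (MvPolynomial.monomial s.1 (MvPolynomial.coeff s.1 P))
        = MvPolynomial.monomial (Finsupp.single (A s.1 s.2).1 1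
            + Finsupp.single (A s.1 s.2).2 1) (MvPolynomial.coeff s.1 P) by
      rw [← hA s.1 s.2]]
    exact evalmon _ _ _ _
  have hco : ∀ k l : Fin d, (f (eb k + eb l) - f (eb k) - f (eb l))/2
      = ∑ s ∈ P.support.attach, MvPolynomial.coeff s.1 P *
        ((((eb k + eb l) (A s.1 s.2).1 * (eb k + eb l) (A s.1 s.2).2)
          - (eb k (A s.1 s.2).1 * eb k (A s.1 s.2).2)
          - (eb l (A s.1 s.2).1 * eb l (A s.1 s.2).2))/2) := by
    intro k l
    rw [hdec (eb k + eb l), hdec (eb k), hdec (eb l),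
      ← Finset.sum_sub_distrib, ← Finset.sum_sub_distrib, Finset.sum_div]
    exact Finset.sum_congr rfl fun s _ => by ring
  rw [hdec x]
  simp only [hco, Finset.sum_mul]
  rw [show (∑ k : Fin d, ∑ l : Fin d, ∑ s ∈ P.support.attach,
        (MvPolynomial.coeff s.1 P *
          ((((eb k + eb l) (A s.1 s.2).1 * (eb k + eb l) (A s.1 s.2).2)
            - (eb k (A s.1 s.2).1 * eb k (A s.1 s.2).2)
            - (eb l (A s.1 s.2).1 * eb l (A s.1 s.2).2))/2)) * x k * x l)
      = ∑ s ∈ P.support.attach, ∑ k : Fin d, ∑ l : Fin d,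
        (MvPolynomial.coeff s.1 P *
          ((((eb k + eb l) (A s.1 s.2).1 * (eb k + eb l) (A s.1 s.2).2)
            - (eb k (A s.1 s.2).1 * eb k (A s.1 s.2).2)
            - (eb l (A s.1 s.2).1 * eb l (A s.1 s.2).2))/2)) * x k * x l from by
    rw [show (∑ k : Fin d, ∑ l : Fin d, ∑ s ∈ P.support.attach,
        (MvPolynomial.coeff s.1 P *
          ((((eb k + eb l) (A s.1 s.2).1 * (eb k + eb l) (A s.1 s.2).2)
            - (eb k (A s.1 s.2).1 * eb k (A s.1 s.2).2)
            - (eb l (A s.1 s.2).1 * eb l (A s.1 s.2).2))/2)) * x k * x l)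
      = ∑ k : Fin d, ∑ s ∈ P.support.attach, ∑ l : Fin d,
        (MvPolynomial.coeff s.1 P *
          ((((eb k + eb l) (A s.1 s.2).1 * (eb k + eb l) (A s.1 s.2).2)
            - (eb k (A s.1 s.2).1 * eb k (A s.1 s.2).2)
            - (eb l (A s.1 s.2).1 * eb l (A s.1 s.2).2))/2)) * x k * x l from
      Finset.sum_congr rfl fun k _ => Finset.sum_comm]
    exact Finset.sum_comm]
  refine Finset.sum_congr rfl fun s _ => ?_
  rw [← inner_collapse (A s.1 s.2).1 (A s.1 s.2).2 x, Finset.mul_sum]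
  refine Finset.sum_congr rfl fun k _ => ?_
  rw [Finset.mul_sum]
  exact Finset.sum_congr rfl fun l _ => by ring

lemma collapse3 {d : ℕ} (g : Fin d → Fin d → Fin d → ℝ) (j k l : Fin d) :
    ∑ a : Fin d, ∑ b : Fin d, ∑ c : Fin d, g a b c * (eb j a * (eb k b * eb l c)) = g j k l := by
  simp [eb, mul_ite, ite_mul, mul_zero, zero_mul, mul_one, Finset.sum_ite_eq']

lemma cubic_polarize {d : ℕ} (T : Fin d → Fin d → Fin d → ℝ)
    (hF : ∀ x : Fin d → ℝ, ∑ a : Fin d, ∑ b : Fin d, ∑ c : Fin d, T a b c * x a * x b * x c = 0)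
    (j k l : Fin d) :
    T j k l + T j l k + T k j l + T k l j + T l j k + T l k j = 0 := by
  have key : ∀ u v w : Fin d → ℝ, ∑ a : Fin d, ∑ b : Fin d, ∑ c : Fin d, (T a b c *
      (u a * (v b * w c)) + (T a b c * (u a * (w b * v c)) + (T a b c * (v a * (u b * w c)) +
      (T a b c * (v a * (w b * u c)) + (T a b c * (w a * (u b * v c)) +
       T a b c * (w a * (v b * u c))))))) = 0 := by
    intro u v w
    have h1 := hF (u + v + w)
    have h2 := hF (u + v)
    have h3 := hF (u + w)
    have h4 := hF (v + w)
    have h5 := hF u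
    have h6 := hF v
    have h7 := hF w
    have expand : ∀ a b c : Fin d, T a b c * (u a * (v b * w c)) + (T a b c * (u a * (w b * v c))
        + (T a b c * (v a * (u b * w c)) + (T a b c * (v a * (w b * u c))
        + (T a b c * (w a * (u b * v c)) + T a b c * (w a * (v b * u c))))))
        = T a b c * (u + v + w) a * (u + v + w) b * (u + v + w) c
          - T a b c * (u + v) a * (u + v) b * (u + v) c
          - T a b c * (u + w) a * (u + w) b * (u + w) c
          - T a b c * (v + w) a * (v + w) b * (v + w) c
          + T a b c * u a * u b * u c + T a b c * v a * v b * v c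
          + T a b c * w a * w b * w c := by
      intro a b c
      simp only [Pi.add_apply]
      ring
    simp only [expand, Finset.sum_add_distrib, Finset.sum_sub_distrib]
    rw [h1, h2, h3, h4, h5, h6, h7]
    ring
  have := key (eb j) (eb k) (eb l)
  simp only [Finset.sum_add_distrib] at this
  rw [collapse3 T j k l, collapse3 T j l k, collapse3 T k j l, collapse3 T k l j,
    collapse3 T l j k, collapse3 T l k j] at this
  linarith

section IndexAlgebra
variable {d : ℕ} (T : Fin d → Fin d → Fin d → Fin d → ℝ)
variable (hs1 : ∀ i j k l, T i j k l = T j i k l)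
variable (hs2 : ∀ i j k l, T i j k l = T i j l k)
variable (hB : ∀ i j k l, T i j k l + T i k j l + T i l j k = 0)

include hs1 hs2 hB in
lemma pairsymT (a b c e : Fin d) : T a b c e = T c e a b := by
  linarith [hB a b c e, hB b a c e, hB c e a b, hB e c a b,
    hs1 b a c e, hs1 c a e b, hs2 a c e b, hs1 c b e a, hs2 b c e a,
    hs1 e c a b, hs1 e a c b, hs2 a e c b, hs1 e b c a, hs2 b e c a,
    hs2 a b c e, hs2 c e a b,
    hs2 c a b e, hs1 c a b e, hs2 e a b c, hs1 e a b c, hs2 e b a c, hs1 e b a c,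
    hs2 c b a e, hs1 c b a e]

/-- the curvature-type tensor built from `T` -/
noncomputable def hhA (a b c e : Fin d) : ℝ := (2/3) * (T a c b e - T b c a e)

lemma hhA_anti1 (a b c e : Fin d) : hhA T b a c e = - hhA T a b c e := by
  simp only [hhA]; ring

include hs1 hB in
lemma hhA_anti2 (a b c e : Fin d) : hhA T a b e c = - hhA T a b c e := by
  simp only [hhA]
  linarith [hB a b c e, hB b a c e, hs1 b a c e]

include hs1 hs2 hB in
lemma hhA_pairswap (a b c e : Fin d) : hhA T c e a b = hhA T a b c e := by
  simp only [hhA]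
  linarith [hs1 c a e b, hs2 a c e b, hs1 e a c b, hs2 a e c b,
    pairsymT T hs1 hs2 hB a e b c, pairsymT T hs1 hs2 hB b c a e]

include hs1 hs2 hB in
lemma hhA_recon (i j k l : Fin d) : hhA T i k j l + hhA T i l j k = 2 * T i j k l := by
  simp only [hhA]
  linarith [hB j k i l, hs1 j k i l, hs1 j i k l, hs1 j l k i, hs2 l j k i, hs2 i j k l]
end IndexAlgebra

lemma sum_pairIdx {d : ℕ} (W : Fin d → Fin d → ℝ) (hsym : ∀ a b, W a b = W b a)
    (hdiag : ∀ a, W a a = 0) :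
    ∑ p : PairIdx d, W p.1.1 p.1.2 = (1/2) * ∑ a : Fin d, ∑ b : Fin d, W a b := by
  classical
  have h0 : ∑ a : Fin d, ∑ b : Fin d, W a b
      = ∑ q ∈ (univ ×ˢ univ : Finset (Fin d × Fin d)), W q.1 q.2 := by
    rw [Finset.sum_product]
  have hsub : ∑ q ∈ (univ ×ˢ univ : Finset (Fin d × Fin d)).filter (fun q => q.1 < q.2), W q.1 q.2
      = ∑ p : PairIdx d, W p.1.1 p.1.2 := by
    rw [Finset.sum_subtype]
    intro q; simp
  have hswap : ∑ q ∈ (univ ×ˢ univ : Finset (Fin d × Fin d)).filter (fun q => q.2 < q.1), W q.1 q.2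
      = ∑ q ∈ (univ ×ˢ univ : Finset (Fin d × Fin d)).filter (fun q => q.1 < q.2), W q.1 q.2 := by
    refine Finset.sum_nbij' (fun q => Prod.swap q) (fun q => Prod.swap q) ?_ ?_ ?_ ?_ ?_ <;>
      try (intro q hq; simp_all)

  have hsplit1 := Finset.sum_filter_add_sum_filter_not
    ((univ ×ˢ univ : Finset (Fin d × Fin d))) (fun q => q.1 < q.2) (fun q => W q.1 q.2)
  have hsplit2 := Finset.sum_filter_add_sum_filter_not
    (((univ ×ˢ univ : Finset (Fin d × Fin d))).filter (fun q => ¬ q.1 < q.2))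
    (fun q => q.2 < q.1) (fun q => W q.1 q.2)
  rw [Finset.filter_filter, Finset.filter_filter] at hsplit2
  have hdiagsum : ∑ q ∈ (univ ×ˢ univ : Finset (Fin d × Fin d)).filter
      (fun q => ¬ q.1 < q.2 ∧ ¬ q.2 < q.1), W q.1 q.2 = 0 := by
    refine Finset.sum_eq_zero fun q hq => ?_
    simp only [Finset.mem_filter] at hq
    have : q.1 = q.2 := le_antisymm (not_lt.mp hq.2.2) (not_lt.mp hq.2.1)
    rw [← this]; exact hdiag q.1
  have hgt : ∑ q ∈ (univ ×ˢ univ : Finset (Fin d × Fin d)).filter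
      (fun q => ¬ q.1 < q.2 ∧ q.2 < q.1), W q.1 q.2
      = ∑ q ∈ (univ ×ˢ univ : Finset (Fin d × Fin d)).filter (fun q => q.2 < q.1), W q.1 q.2 := by
    congr 1
    ext q
    simp only [Finset.mem_filter]
    constructor
    · rintro ⟨h1, _, h3⟩; exact ⟨h1, h3⟩
    · rintro ⟨h1, h2⟩; exact ⟨h1, not_lt_of_gt h2, h2⟩
  rw [← hsub, h0]
  rw [← hsplit1, ← hsplit2, hgt, hswap, hdiagsum]
  ring


lemma sum_pair {d : ℕ} (G : Fin d → Fin d → ℝ) (hG : ∀ a b, G a b = -G b a)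
    (x : Fin d → ℝ) (i : Fin d) :
    ∑ p : PairIdx d, G p.1.1 p.1.2 *
      ((if i = p.1.1 then x p.1.2 else 0) - (if i = p.1.2 then x p.1.1 else 0))
    = ∑ k : Fin d, G i k * x k := by
  rw [sum_pairIdx (fun a b => G a b * ((if i = a then x b else 0) - (if i = b then x a else 0)))
      (fun a b => by rw [hG a b]; ring)
      (fun a => by simp)]
  have e1 : ∀ a : Fin d, ∑ b : Fin d,
      G a b * ((if i = a then x b else 0) - (if i = b then x a else 0))
      = (if i = a then ∑ b : Fin d, G a b * x b else 0) - G a i * x a := by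
    intro a
    simp only [show ∀ b : Fin d, G a b * ((if i = a then x b else 0) - (if i = b then x a else 0))
        = (if i = a then G a b * x b else 0) - (if i = b then G a b * x a else 0) from
      fun b => by split_ifs <;> ring]
    rw [Finset.sum_sub_distrib]
    congr 1
    · split_ifs with h <;> simp
    · rw [Finset.sum_ite_eq]; simp
  simp only [e1]
  rw [Finset.sum_sub_distrib, Finset.sum_ite_eq]
  simp only [Finset.mem_univ, if_true]
  have e2 : ∑ a : Fin d, G a i * x a = - ∑ a : Fin d, G i a * x a := by
    rw [← Finset.sum_neg_distrib]
    exact Finset.sum_congr rfl fun a _ => by rw [hG a i]; ring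
  rw [e2]; ring

lemma skew_apply {d : ℕ} (r : PairIdx d) (u s : Fin d) :
    skewBasis r u s
      = (if s = r.1.2 ∧ u = r.1.1 then 1 else 0) - (if s = r.1.1 ∧ u = r.1.2 then 1 else 0) := by
  simp [skewBasis, Matrix.single, eq_comm, and_comm]

lemma skew_entry {d : ℕ} (p q : PairIdx d) (x : Fin d → ℝ) (i j : Fin d) :
    (skewBasis p * Matrix.vecMulVec x x * (skewBasis q)ᵀ) i j
      = ((if i = p.1.1 then x p.1.2 else 0) - (if i = p.1.2 then x p.1.1 else 0)) *
        ((if j = q.1.1 then x q.1.2 else 0) - (if j = q.1.2 then x q.1.1 else 0)) := by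
  have step1 : ∀ t : Fin d, (skewBasis p * Matrix.vecMulVec x x) i t
      = ((if i = p.1.1 then x p.1.2 else 0) - (if i = p.1.2 then x p.1.1 else 0)) * x t := by
    intro t
    rw [Matrix.mul_apply]
    simp only [skew_apply, Matrix.vecMulVec_apply, sub_mul, ite_and, ite_mul, one_mul, zero_mul,
      Finset.sum_sub_distrib, Finset.sum_ite_eq', Finset.mem_univ, if_true]
  rw [Matrix.mul_apply]
  simp only [step1, Matrix.transpose_apply, skew_apply]
  simp only [mul_sub, sub_mul, ite_and, mul_ite, ite_mul, mul_one, mul_zero, one_mul, zero_mul,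
    Finset.sum_sub_distrib, Finset.sum_ite_eq', Finset.mem_univ, if_true]

lemma cH_entry {d : ℕ} (T : Fin d → Fin d → Fin d → Fin d → ℝ)
    (hs1 : ∀ i j k l, T i j k l = T j i k l)
    (hB : ∀ i j k l, T i j k l + T i k j l + T i l j k = 0)
    (x : Fin d → ℝ) (i j : Fin d) :
    cH (Matrix.of fun p q : PairIdx d => hhA T p.1.1 p.1.2 q.1.1 q.1.2) x i j
      = ∑ k : Fin d, (∑ l : Fin d, hhA T i k j l * x l) * x k := by
  rw [cH, Matrix.sum_apply]
  simp only [Matrix.sum_apply, Matrix.smul_apply, smul_eq_mul, Matrix.of_apply, skew_entry]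
  have inner : ∀ p : PairIdx d, ∑ q : PairIdx d, hhA T p.1.1 p.1.2 q.1.1 q.1.2 *
      (((if i = p.1.1 then x p.1.2 else 0) - (if i = p.1.2 then x p.1.1 else 0)) *
       ((if j = q.1.1 then x q.1.2 else 0) - (if j = q.1.2 then x q.1.1 else 0)))
      = (∑ l : Fin d, hhA T p.1.1 p.1.2 j l * x l) *
        ((if i = p.1.1 then x p.1.2 else 0) - (if i = p.1.2 then x p.1.1 else 0)) := by
    intro p
    calc ∑ q : PairIdx d, hhA T p.1.1 p.1.2 q.1.1 q.1.2 *
        (((if i = p.1.1 then x p.1.2 else 0) - (if i = p.1.2 then x p.1.1 else 0)) *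
         ((if j = q.1.1 then x q.1.2 else 0) - (if j = q.1.2 then x q.1.1 else 0)))
        = (∑ q : PairIdx d, hhA T p.1.1 p.1.2 q.1.1 q.1.2 *
            ((if j = q.1.1 then x q.1.2 else 0) - (if j = q.1.2 then x q.1.1 else 0))) *
          ((if i = p.1.1 then x p.1.2 else 0) - (if i = p.1.2 then x p.1.1 else 0)) := by
          rw [Finset.sum_mul]
          exact Finset.sum_congr rfl fun q _ => by ring
      _ = (∑ l : Fin d, hhA T p.1.1 p.1.2 j l * x l) *
          ((if i = p.1.1 then x p.1.2 else 0) - (if i = p.1.2 then x p.1.1 else 0)) := by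
          rw [sum_pair (hhA T p.1.1 p.1.2) (fun a b => hhA_anti2 T hs1 hB p.1.1 p.1.2 b a) x j]
  simp only [inner]
  rw [show (∑ p : PairIdx d, (∑ l : Fin d, hhA T p.1.1 p.1.2 j l * x l) *
      ((if i = p.1.1 then x p.1.2 else 0) - (if i = p.1.2 then x p.1.1 else 0)))
      = ∑ k : Fin d, (∑ l : Fin d, hhA T i k j l * x l) * x k from ?_]
  have hG : ∀ a b : Fin d, (∑ l : Fin d, hhA T a b j l * x l) = -(∑ l : Fin d, hhA T b a j l * x l) := by
    intro a b
    rw [← Finset.sum_neg_distrib]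
    exact Finset.sum_congr rfl fun l _ => by rw [hhA_anti1 T a b j l]; ring
  have := sum_pair (fun a b => ∑ l : Fin d, hhA T a b j l * x l) hG x i
  simpa using this


/-- Every `c : ℝ^d → S^d` with homogeneous degree-2 polynomial entries and
`c(x) x = 0` for all `x` is of the form `c_H` for some symmetric matrix `H`, i.e.
`C = { c_H : H ∈ S^m }` with `m = choose d 2`. -/
theorem stmt2 (d : ℕ) (hd : 1 ≤ d)
    (c : (Fin d → ℝ) → Matrix (Fin d) (Fin d) ℝ)
    (hsymm : ∀ x, (c x).IsSymm)
    (hhom : ∀ i j, IsHomPolyFun d 2 (fun x => c x i j))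
    (hker : ∀ x, (c x).mulVec x = 0) :
    ∃ H : Matrix (PairIdx d) (PairIdx d) ℝ, H.IsSymm ∧ ∀ x, c x = cH H x := by
  classical
  obtain ⟨T, hTdef⟩ : ∃ T : Fin d → Fin d → Fin d → Fin d → ℝ,
      T = fun i j k l => (c (eb k + eb l) i j - c (eb k) i j - c (eb l) i j) / 2 := ⟨_, rfl⟩
  have rep : ∀ (x : Fin d → ℝ) (i j : Fin d),
      c x i j = ∑ k : Fin d, ∑ l : Fin d, T i j k l * x k * x l := by
    intro x i j
    simp only [hTdef]
    simpa using quad_rep (hhom i j) x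
  have hs1 : ∀ i j k l, T i j k l = T j i k l := by
    intro i j k l
    simp only [hTdef]
    rw [(hsymm (eb k + eb l)).apply i j, (hsymm (eb k)).apply i j, (hsymm (eb l)).apply i j]
  have hs2 : ∀ i j k l, T i j k l = T i j l k := by
    intro i j k l
    simp only [hTdef]
    rw [add_comm (eb k) (eb l)]
    ring
  have hB : ∀ i j k l, T i j k l + T i k j l + T i l j k = 0 := by
    intro i j k l
    have hF : ∀ x : Fin d → ℝ,
        ∑ a : Fin d, ∑ b : Fin d, ∑ e : Fin d, T i a b e * x a * x b * x e = 0 := by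
      intro x
      have h0 : ∑ a : Fin d, c x i a * x a = 0 := by
        have := congrFun (hker x) i
        simpa [Matrix.mulVec, dotProduct] using this
      calc ∑ a : Fin d, ∑ b : Fin d, ∑ e : Fin d, T i a b e * x a * x b * x e
          = ∑ a : Fin d, c x i a * x a := by
            refine Finset.sum_congr rfl fun a _ => ?_
            rw [rep x i a, Finset.sum_mul]
            refine Finset.sum_congr rfl fun b _ => ?_
            rw [Finset.sum_mul]
            exact Finset.sum_congr rfl fun e _ => by ring
        _ = 0 := h0
    have h6 := cubic_polarize (fun a b e => T i a b e) hF j k l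
    have e1 := hs2 i j k l
    have e2 := hs2 i k j l
    have e3 := hs2 i l j k
    linarith
  refine ⟨Matrix.of (fun p q : PairIdx d => hhA T p.1.1 p.1.2 q.1.1 q.1.2), ?_, ?_⟩
  · apply Matrix.IsSymm.ext
    intro p q
    show hhA T q.1.1 q.1.2 p.1.1 p.1.2 = hhA T p.1.1 p.1.2 q.1.1 q.1.2
    exact hhA_pairswap T hs1 hs2 hB _ _ _ _
  · intro x
    ext i j
    rw [rep x i j, cH_entry T hs1 hB x i j]
    have hsw : ∑ k : Fin d, ∑ l : Fin d, hhA T i k j l * x l * x k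
        = ∑ k : Fin d, ∑ l : Fin d, hhA T i l j k * x k * x l := Finset.sum_comm
    have key : ∀ k l : Fin d, hhA T i k j l * x l * x k + hhA T i l j k * x k * x l
        = 2 * (T i j k l * x k * x l) := by
      intro k l
      have h := hhA_recon T hs1 hs2 hB i j k l
      linear_combination (x k * x l) * h
    have h2 : (∑ k : Fin d, ∑ l : Fin d, hhA T i k j l * x l * x k)
        + (∑ k : Fin d, ∑ l : Fin d, hhA T i l j k * x k * x l)
        = 2 * ∑ k : Fin d, ∑ l : Fin d, T i j k l * x k * x l := by
      rw [Finset.mul_sum, ← Finset.sum_add_distrib]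
      refine Finset.sum_congr rfl fun k _ => ?_
      rw [← Finset.sum_add_distrib, Finset.mul_sum]
      exact Finset.sum_congr rfl fun l _ => key k l
    have expand : ∑ k : Fin d, (∑ l : Fin d, hhA T i k j l * x l) * x k
        = ∑ k : Fin d, ∑ l : Fin d, hhA T i k j l * x l * x k :=
      Finset.sum_congr rfl fun k _ => Finset.sum_mul _ _ _
    rw [expand]
    linarith [hsw, h2]
end

section
/- Let d ≥ 1. The set C is a real linear space and its dimension equals 2·binomial(d,4) + 3·binomial(d,3) + binomial(d,2) = d²(d²−1)/12 (with the convention binomial(d,k) = 0 for k > d). -/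
open Matrix

/-- The set `C` of maps `c : ℝ^d → S^d` with homogeneous degree-2 polynomial entries
and `c(x) x = 0` for all `x`, viewed as a subset of the space of all maps
`ℝ^d → ℝ^{d×d}`. -/
def setC (d : ℕ) : Set ((Fin d → ℝ) → Matrix (Fin d) (Fin d) ℝ) :=
  {c | (∀ i j, IsHomPolyFun d 2 (fun x => c x i j)) ∧
       (∀ x, (c x).IsSymm) ∧ (∀ x, (c x).mulVec x = 0)}


set_option synthInstance.maxHeartbeats 1000000
set_option maxHeartbeats 1000000

open MvPolynomial Finset

variable {d : ℕ}

/-- degree of a finsupp on a fintype is sum over univ -/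
lemma degree_eq_sum_univ (s : Fin d →₀ ℕ) : s.degree = ∑ i, s i := by
  rw [Finsupp.degree]
  exact Finset.sum_subset (Finset.subset_univ _) (by
    intro x _ hx
    simpa using (Finsupp.notMem_support_iff.mp hx))

lemma degree_sub_single {s : Fin d →₀ ℕ} {i : Fin d} (h : s i ≠ 0) :
    (s - Finsupp.single i 1).degree = s.degree - 1 := by
  rw [degree_eq_sum_univ, degree_eq_sum_univ]
  have h1 : (1:ℕ) ≤ ∑ j, s j := le_trans (Nat.one_le_iff_ne_zero.mpr h)
    (Finset.single_le_sum (f := fun j => s j) (fun _ _ => Nat.zero_le _) (mem_univ i))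
  rw [Finset.sum_congr rfl (fun j _ => Finsupp.tsub_apply s (Finsupp.single i 1) j)]
  rw [eq_tsub_iff_add_eq_of_le h1]
  have h2 : (1:ℕ) = ∑ j, (Finsupp.single i 1) j := by
    simp [Finsupp.single_apply]
  rw [h2, ← Finset.sum_add_distrib]
  apply Finset.sum_congr rfl
  intro j _
  rcases eq_or_ne j i with rfl | hne
  · simp [Nat.sub_add_cancel (Nat.one_le_iff_ne_zero.mpr h)]
  · simp [Finsupp.single_apply, (Ne.symm hne)]

lemma pderiv_isHomogeneous {P : MvPolynomial (Fin d) ℝ} {n : ℕ} (i : Fin d)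
    (hP : P.IsHomogeneous n) : (pderiv i P).IsHomogeneous (n - 1) := by
  rw [P.as_sum, map_sum]
  apply IsHomogeneous.sum
  intro s hs
  rw [pderiv_monomial]
  by_cases h : s i = 0
  · simp [h, isHomogeneous_zero]
  · apply isHomogeneous_monomial
    have hdeg : s.degree = n := by
      by_contra hne
      exact (MvPolynomial.mem_support_iff.mp hs) (hP.coeff_eq_zero hne)
    rw [degree_sub_single h, hdeg]

lemma pderiv_comm (a b : Fin d) (P : MvPolynomial (Fin d) ℝ) :
    pderiv a (pderiv b P) = pderiv b (pderiv a P) := by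
  induction P using MvPolynomial.induction_on' with
  | monomial s r =>
    rw [pderiv_monomial, pderiv_monomial, pderiv_monomial, pderiv_monomial]
    rcases eq_or_ne a b with rfl | hab
    · rfl
    · have h1 := Finsupp.tsub_apply s (Finsupp.single b 1) a
      have h2 := Finsupp.tsub_apply s (Finsupp.single a 1) b
      rw [Finsupp.single_apply, if_neg (Ne.symm hab), Nat.sub_zero] at h1
      rw [Finsupp.single_apply, if_neg hab, Nat.sub_zero] at h2
      rw [h1, h2, tsub_right_comm]
      ring_nf
  | add p q hp hq => simp [hp, hq]

/-- Euler's identity for homogeneous polynomials. -/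
lemma euler_identity {P : MvPolynomial (Fin d) ℝ} {n : ℕ} (hP : P.IsHomogeneous n) :
    ∑ i, X i * pderiv i P = (n : ℝ) • P := by
  conv_lhs => rw [P.as_sum]
  conv_rhs => rw [P.as_sum]
  simp only [map_sum, Finset.mul_sum, Finset.smul_sum]
  rw [Finset.sum_comm]
  apply Finset.sum_congr rfl
  intro s hs
  have hdeg : s.degree = n := by
    by_contra hne
    exact (MvPolynomial.mem_support_iff.mp hs) (hP.coeff_eq_zero hne)
  have key : ∀ i, X i * pderiv i (monomial s (coeff s P)) = (s i : ℝ) • monomial s (coeff s P) := by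
    intro i
    rw [pderiv_monomial]
    by_cases h : s i = 0
    · simp [h]
    · rw [X, monomial_mul, one_mul]
      have : Finsupp.single i 1 + (s - Finsupp.single i 1) = s := by
        ext j
        rcases eq_or_ne j i with rfl | hne
        · simp [Nat.add_sub_cancel' (Nat.one_le_iff_ne_zero.mpr h)]
        · simp [Finsupp.single_apply, Ne.symm hne, hne]
      rw [this, smul_monomial]
      congr 1
      simp [mul_comm]
  rw [Finset.sum_congr rfl (fun i _ => key i)]
  rw [← Finset.sum_smul]
  congr 1
  rw [← Nat.cast_sum, ← degree_eq_sum_univ, hdeg]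

noncomputable section

/-- The linear map sending a matrix of polynomials `P` to the vector `i ↦ ∑ j, P i j * X j`. -/
def PhiMap (d : ℕ) : (Fin d → Fin d → MvPolynomial (Fin d) ℝ) →ₗ[ℝ] (Fin d → MvPolynomial (Fin d) ℝ) where
  toFun P := fun i => ∑ j, P i j * X j
  map_add' P Q := by funext i; simp [add_mul, Finset.sum_add_distrib]
  map_smul' r P := by funext i; simp [Finset.smul_sum, smul_mul_assoc]

/-- Symmetric matrices of homogeneous quadratic polynomials. -/
def Qsub (d : ℕ) : Submodule ℝ (Fin d → Fin d → MvPolynomial (Fin d) ℝ) where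
  carrier := {P | (∀ i j, (P i j).IsHomogeneous 2) ∧ (∀ i j, P i j = P j i)}
  add_mem' := by
    rintro P Q ⟨hP1, hP2⟩ ⟨hQ1, hQ2⟩
    exact ⟨fun i j => (hP1 i j).add (hQ1 i j), fun i j => by
      simp only [Pi.add_apply, hP2 i j, hQ2 i j]⟩
  zero_mem' := ⟨fun i j => isHomogeneous_zero _ _ _, fun i j => rfl⟩
  smul_mem' := by
    rintro r P ⟨hP1, hP2⟩
    refine ⟨fun i j => ?_, fun i j => by simp only [Pi.smul_apply, hP2 i j]⟩
    have := (hP1 i j).C_mul r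
    simpa [MvPolynomial.smul_eq_C_mul] using this

/-- Vectors of homogeneous cubic polynomials. -/
def Rsub (d : ℕ) : Submodule ℝ (Fin d → MvPolynomial (Fin d) ℝ) :=
  Submodule.pi Set.univ (fun _ => MvPolynomial.homogeneousSubmodule (Fin d) ℝ 3)

def Msub (d : ℕ) : Submodule ℝ (Fin d → Fin d → MvPolynomial (Fin d) ℝ) :=
  Qsub d ⊓ LinearMap.ker (PhiMap d)

/-- Evaluation of a matrix of polynomials as a matrix-valued function. -/
def Emap (d : ℕ) : (Fin d → Fin d → MvPolynomial (Fin d) ℝ) →ₗ[ℝ]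
    ((Fin d → ℝ) → Matrix (Fin d) (Fin d) ℝ) where
  toFun P := fun x => Matrix.of fun i j => MvPolynomial.eval x (P i j)
  map_add' P Q := by funext x; ext i j; simp
  map_smul' r P := by funext x; ext i j; simp

lemma Emap_inj (d : ℕ) : Function.Injective (Emap d) := by
  intro P Q h
  funext i j
  apply MvPolynomial.funext
  intro x
  have := congrFun h x
  exact congrFun (congrFun (congrArg Matrix.of.symm this) i) j

lemma setC_eq_map (d : ℕ) : setC d = ↑(Submodule.map (Emap d) (Msub d)) := by
  ext c
  constructor
  · rintro ⟨h1, h2, h3⟩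
    classical
    choose P hPhom hPeval using fun i j => h1 i j
    refine ⟨P, ⟨⟨hPhom, ?_⟩, ?_⟩, ?_⟩
    · -- symmetry
      intro i j
      apply MvPolynomial.funext
      intro x
      rw [← hPeval i j x, ← hPeval j i x]
      have := h2 x
      rw [Matrix.IsSymm] at this
      have h := congrFun (congrFun this j) i
      simpa [Matrix.transpose_apply] using h
    · -- kernel
      rw [SetLike.mem_coe, LinearMap.mem_ker]
      funext i
      apply MvPolynomial.funext
      intro x
      have h := congrFun (h3 x) i
      simp only [PhiMap, LinearMap.coe_mk, AddHom.coe_mk, map_sum, MvPolynomial.eval_mul,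
        MvPolynomial.eval_X, Pi.zero_apply, map_zero]
      rw [Matrix.mulVec, dotProduct] at h
      simp only [Pi.zero_apply] at h
      rw [← h]
      exact Finset.sum_congr rfl fun j _ => by rw [← hPeval i j x]
    · -- evaluation
      funext x
      ext i j
      exact (hPeval i j x).symm
  · rintro ⟨P, ⟨⟨hhom, hsym⟩, hker⟩, rfl⟩
    refine ⟨fun i j => ⟨P i j, hhom i j, fun x => rfl⟩, fun x => ?_, fun x => ?_⟩
    · rw [Matrix.IsSymm]
      ext i j
      simp only [Matrix.transpose_apply, Emap, LinearMap.coe_mk, AddHom.coe_mk, Matrix.of_apply]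
      rw [hsym j i]
    · rw [SetLike.mem_coe, LinearMap.mem_ker] at hker
      funext i
      have h := congrFun hker i
      simp only [PhiMap, LinearMap.coe_mk, AddHom.coe_mk, Pi.zero_apply] at h
      rw [Matrix.mulVec, dotProduct]
      have := congrArg (MvPolynomial.eval x) h
      simp only [map_sum, MvPolynomial.eval_mul, MvPolynomial.eval_X, map_zero] at this
      simpa [Emap] using this

open MvPolynomial in
/-- Explicit section for `PhiMap`. -/
def sectP (d : ℕ) (f : Fin d → MvPolynomial (Fin d) ℝ) (a b : Fin d) : MvPolynomial (Fin d) ℝ :=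
  C (6⁻¹:ℝ) * (C 2 * pderiv b (f a) + C 2 * pderiv a (f b)
    - ∑ c, X c * pderiv a (pderiv b (f c)))

lemma sectP_mem_Q (d : ℕ) (f : Fin d → MvPolynomial (Fin d) ℝ)
    (hf : ∀ i, (f i).IsHomogeneous 3) : sectP d f ∈ Qsub d := by
  constructor
  · intro a b
    apply MvPolynomial.IsHomogeneous.C_mul
    apply MvPolynomial.IsHomogeneous.sub
    · exact ((pderiv_isHomogeneous b (hf a)).C_mul 2).add ((pderiv_isHomogeneous a (hf b)).C_mul 2)
    · apply MvPolynomial.IsHomogeneous.sum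
      intro c _
      exact (isHomogeneous_X ℝ c).mul (pderiv_isHomogeneous a (pderiv_isHomogeneous b (hf c)))
  · intro a b
    unfold sectP
    congr 1
    congr 1
    · ring
    · exact Finset.sum_congr rfl fun c _ => by rw [pderiv_comm]

lemma phi_sectP (d : ℕ) (f : Fin d → MvPolynomial (Fin d) ℝ)
    (hf : ∀ i, (f i).IsHomogeneous 3) : PhiMap d (sectP d f) = f := by
  funext a
  have e1 : ∑ b, X b * pderiv b (f a) = C (3:ℝ) * f a := by
    rw [euler_identity (hf a)]
    rw [MvPolynomial.smul_eq_C_mul]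
    norm_num
  have e2 : ∀ c, ∑ b, X b * pderiv b (pderiv a (f c)) = C (2:ℝ) * pderiv a (f c) := by
    intro c
    rw [euler_identity (pderiv_isHomogeneous a (hf c))]
    rw [MvPolynomial.smul_eq_C_mul]
    norm_num
  show ∑ b, sectP d f a b * X b = f a
  have expand : ∑ b, sectP d f a b * X b =
      C (6⁻¹:ℝ) * (C 2 * (∑ b, X b * pderiv b (f a)) + C 2 * (∑ b, X b * pderiv a (f b))
        - ∑ b, X b * (∑ c, X c * pderiv a (pderiv b (f c)))) := by
    simp only [Finset.mul_sum, ← Finset.sum_sub_distrib, ← Finset.sum_add_distrib]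
    apply Finset.sum_congr rfl
    intro b _
    unfold sectP
    rw [← Finset.mul_sum]
    ring
  have swap3 : ∑ b, X b * (∑ c, X c * pderiv a (pderiv b (f c)))
      = C (2:ℝ) * ∑ c, X c * pderiv a (f c) := by
    simp only [Finset.mul_sum]
    rw [Finset.sum_comm]
    apply Finset.sum_congr rfl
    intro c _
    have : ∑ b, X b * (X c * pderiv a (pderiv b (f c)))
        = X c * ∑ b, X b * pderiv b (pderiv a (f c)) := by
      rw [Finset.mul_sum]
      apply Finset.sum_congr rfl
      intro b _
      rw [pderiv_comm b a]
      ring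
    rw [this, e2 c]
    ring
  rw [expand, swap3, e1]
  have hb : ∑ b, X b * pderiv a (f b) = ∑ c, X c * pderiv a (f c) := rfl
  rw [hb]
  have hC : (C (6⁻¹:ℝ) * (C (2:ℝ) * C (3:ℝ)) : MvPolynomial (Fin d) ℝ) = 1 := by
    rw [← _root_.map_mul, ← _root_.map_mul]
    norm_num
  calc C (6⁻¹:ℝ) * (C 2 * (C 3 * f a) + C 2 * (∑ c, X c * pderiv a (f c))
        - C 2 * (∑ c, X c * pderiv a (f c)))
      = C (6⁻¹:ℝ) * (C (2:ℝ) * C (3:ℝ)) * f a := by ring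
    _ = f a := by rw [hC, one_mul]

/-- `Qsub` is equivalent to functions from ordered index pairs to quadratics. -/
def eQ (d : ℕ) : Qsub d ≃ₗ[ℝ]
    ({p : Fin d × Fin d // p.1 ≤ p.2} → homogeneousSubmodule (Fin d) ℝ 2) where
  toFun P p := ⟨P.1 p.1.1 p.1.2, P.2.1 _ _⟩
  map_add' P Q := rfl
  map_smul' r P := rfl
  invFun g := ⟨fun i j => if h : i ≤ j then (g ⟨(i,j), h⟩ : MvPolynomial (Fin d) ℝ)
      else (g ⟨(j,i), le_of_not_ge h⟩ : MvPolynomial (Fin d) ℝ), by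
    constructor
    · intro i j
      by_cases h : i ≤ j
      · simp only [dif_pos h]; exact (g ⟨(i,j), h⟩).2
      · simp only [dif_neg h]; exact (g ⟨(j,i), le_of_not_ge h⟩).2
    · intro i j
      rcases le_or_gt i j with h | h
      · simp only [dif_pos h]
        rcases eq_or_lt_of_le h with rfl | hlt
        · simp only [dif_pos le_rfl]
        · simp only [dif_neg (not_le_of_gt hlt)]
      · simp only [dif_neg (not_le_of_gt h), dif_pos (le_of_lt h)]⟩
  left_inv P := by
    apply Subtype.ext
    funext i j
    by_cases h : i ≤ j
    · simp only [dif_pos h]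
    · simp only [dif_neg h]
      exact (P.2.2 j i).symm ▸ (P.2.2 i j).symm
  right_inv g := by
    funext p
    apply Subtype.ext
    simp only [dif_pos p.2]

/-- `Rsub` is equivalent to vectors of cubics. -/
def eR (d : ℕ) : Rsub d ≃ₗ[ℝ] (Fin d → homogeneousSubmodule (Fin d) ℝ 3) where
  toFun f i := ⟨f.1 i, f.2 i (Set.mem_univ i)⟩
  map_add' f g := rfl
  map_smul' r f := rfl
  invFun g := ⟨fun i => g i, fun i _ => (g i).2⟩
  left_inv f := rfl
  right_inv g := rfl

/-- `Msub` is the kernel of `PhiMap` restricted to `Qsub`. -/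
def eM (d : ℕ) : Msub d ≃ₗ[ℝ] LinearMap.ker ((PhiMap d).domRestrict (Qsub d)) where
  toFun x := ⟨⟨x.1, x.2.1⟩, by
    rw [LinearMap.mem_ker, LinearMap.domRestrict_apply]
    exact x.2.2⟩
  map_add' x y := rfl
  map_smul' r x := rfl
  invFun y := ⟨y.1.1, ⟨y.1.2, by
    have := y.2
    rw [LinearMap.mem_ker, LinearMap.domRestrict_apply] at this
    exact this⟩⟩
  left_inv x := rfl
  right_inv y := rfl

lemma range_eq (d : ℕ) :
    LinearMap.range ((PhiMap d).domRestrict (Qsub d)) = Rsub d := by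
  apply le_antisymm
  · rintro _ ⟨⟨P, hP⟩, rfl⟩
    intro i _
    rw [LinearMap.domRestrict_apply]
    show (∑ j, P i j * X j).IsHomogeneous 3
    apply MvPolynomial.IsHomogeneous.sum
    intro j _
    exact (hP.1 i j).mul (isHomogeneous_X ℝ j)
  · intro f hf
    exact ⟨⟨sectP d f, sectP_mem_Q d f (fun i => hf i (Set.mem_univ i))⟩,
      phi_sectP d f (fun i => hf i (Set.mem_univ i))⟩

variable {d : ℕ}

/-- degree-n finsupps are equivalent to `Sym (Fin d) n`. -/
def eSym (d n : ℕ) : {x : Fin d →₀ ℕ // x.degree = n} ≃ Sym (Fin d) n :=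
  (Equiv.subtypeEquivRight (fun P => by
    have : P.sum (fun _ => id) = P.degree := rfl
    rw [this])).symm.trans (Sym.equivNatSum (Fin d) n).symm

noncomputable instance (d n : ℕ) : Fintype {x : Fin d →₀ ℕ // x.degree = n} :=
  Fintype.ofEquiv _ (eSym d n).symm

lemma card_degree_eq (d n : ℕ) :
    Fintype.card {x : Fin d →₀ ℕ // x.degree = n} = (d + n - 1).choose n := by
  rw [Fintype.card_congr (eSym d n), Sym.card_sym_eq_choose, Fintype.card_fin]

noncomputable def basisH (d n : ℕ) :
    Module.Basis {x : Fin d →₀ ℕ // x.degree = n} ℝ (homogeneousSubmodule (Fin d) ℝ n) := by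
  have h : restrictSupport ℝ {x : Fin d →₀ ℕ | x.degree = n}
      = homogeneousSubmodule (Fin d) ℝ n :=
    (homogeneousSubmodule_eq_finsupp_supported (Fin d) ℝ n).symm
  exact (basisRestrictSupport ℝ {x : Fin d →₀ ℕ | x.degree = n}).map (LinearEquiv.ofEq _ _ h)

instance (d n : ℕ) : Module.Finite ℝ (homogeneousSubmodule (Fin d) ℝ n) :=
  Module.Finite.of_basis (basisH d n)

lemma finrank_H (d n : ℕ) :
    Module.finrank ℝ (homogeneousSubmodule (Fin d) ℝ n) = (d + n - 1).choose n := by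
  rw [Module.finrank_eq_card_basis (basisH d n), card_degree_eq]

lemma card_I2 (d : ℕ) :
    Fintype.card {p : Fin d × Fin d // p.1 ≤ p.2} = (d + 1).choose 2 := by
  rw [← Fintype.card_congr (Sym2.sortEquiv (α := Fin d))]
  rw [Fintype.card_congr (Sym2.equivSym (Fin d)), Sym.card_sym_eq_choose, Fintype.card_fin]
  congr 1

lemma karith (d k : ℕ) : Nat.factorial k * d.choose k = d.descFactorial k :=
  (Nat.descFactorial_eq_factorial_mul_choose d k).symm

lemma arith1 (d : ℕ) : 2*d.choose 4 + 3*d.choose 3 + d.choose 2 + d * (d+2).choose 3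
    = (d+1).choose 2 * (d+1).choose 2 := by
  apply Nat.eq_of_mul_eq_mul_left (show 0 < 24 by norm_num)
  have k4 : 24 * d.choose 4 = d.descFactorial 4 := by
    rw [← karith d 4]; norm_num [Nat.factorial]
  have k3 : 6 * d.choose 3 = d.descFactorial 3 := by
    rw [← karith d 3]; norm_num [Nat.factorial]
  have k2 : 2 * d.choose 2 = d.descFactorial 2 := by
    rw [← karith d 2]; norm_num [Nat.factorial]
  have k3' : 6 * (d+2).choose 3 = (d+2).descFactorial 3 := by
    rw [← karith (d+2) 3]; norm_num [Nat.factorial]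
  have k2' : 2 * (d+1).choose 2 = (d+1).descFactorial 2 := by
    rw [← karith (d+1) 2]; norm_num [Nat.factorial]
  calc 24 * (2 * d.choose 4 + 3*d.choose 3 + d.choose 2 + d*(d+2).choose 3)
      = 2*(24*d.choose 4) + 12*(6*d.choose 3) + 12*(2*d.choose 2) + 4*d*(6*(d+2).choose 3) := by
        ring
    _ = 2*d.descFactorial 4 + 12*d.descFactorial 3 + 12*d.descFactorial 2
        + 4*d*(d+2).descFactorial 3 := by rw [k4, k3, k2, k3']
    _ = 6*((d+1).descFactorial 2)*((d+1).descFactorial 2) := by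
        match d with
        | 0 => decide
        | 1 => decide
        | 2 => decide
        | 3 => decide
        | (e+4) => simp [Nat.descFactorial]; ring
    _ = 6*((2*(d+1).choose 2))*(2*(d+1).choose 2) := by rw [k2']
    _ = 24*((d+1).choose 2 * (d+1).choose 2) := by ring

lemma arith2 (d : ℕ) : 2*d.choose 4 + 3*d.choose 3 + d.choose 2 = d^2*(d^2-1)/12 := by
  have key : d^2*(d^2-1) = 12 * (2*d.choose 4 + 3*d.choose 3 + d.choose 2) := by
    apply Nat.eq_of_mul_eq_mul_left (show 0 < 2 by norm_num)
    have k4 : 24 * d.choose 4 = d.descFactorial 4 := by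
      rw [← karith d 4]; norm_num [Nat.factorial]
    have k3 : 6 * d.choose 3 = d.descFactorial 3 := by
      rw [← karith d 3]; norm_num [Nat.factorial]
    have k2 : 2 * d.choose 2 = d.descFactorial 2 := by
      rw [← karith d 2]; norm_num [Nat.factorial]
    calc 2 * (d^2*(d^2-1))
        = 2*d.descFactorial 4 + 12*d.descFactorial 3 + 12*d.descFactorial 2 := by
          match d with
          | 0 => decide
          | 1 => decide
          | 2 => decide
          | 3 => decide
          | (e+4) =>
            have h1 : (e+4)^2 - 1 = e^2 + 8*e + 15 := by
              have : (e+4)^2 = e^2+8*e+16 := by ring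
              omega
            rw [h1]
            simp [Nat.descFactorial]
            ring
      _ = 2*(24 * d.choose 4) + 12*(6*d.choose 3) + 12*(2*d.choose 2) := by rw [k4, k3, k2]
      _ = 2 * (12 * (2*d.choose 4 + 3*d.choose 3 + d.choose 2)) := by ring
  rw [key, Nat.mul_div_cancel_left _ (show 0 < 12 by norm_num)]

instance (d : ℕ) : FiniteDimensional ℝ (Qsub d) :=
  Module.Finite.equiv (eQ d).symm

lemma finrank_Q (d : ℕ) :
    Module.finrank ℝ (Qsub d) = (d+1).choose 2 * (d+1).choose 2 := by
  rw [LinearEquiv.finrank_eq (eQ d), Module.finrank_pi_fintype]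
  rw [Finset.sum_const, card_univ, card_I2, smul_eq_mul]
  rw [finrank_H]
  congr 2

lemma finrank_Rsub (d : ℕ) :
    Module.finrank ℝ (Rsub d) = d * (d+2).choose 3 := by
  rw [LinearEquiv.finrank_eq (eR d), Module.finrank_pi_fintype]
  rw [Finset.sum_const, card_univ, Fintype.card_fin, smul_eq_mul]
  rw [finrank_H]
  congr 2

lemma finrank_M (d : ℕ) :
    Module.finrank ℝ (Msub d) = 2 * d.choose 4 + 3 * d.choose 3 + d.choose 2 := by
  have rn := LinearMap.finrank_range_add_finrank_ker ((PhiMap d).domRestrict (Qsub d))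
  rw [range_eq, finrank_Rsub, finrank_Q, ← LinearEquiv.finrank_eq (eM d)] at rn
  have := arith1 d
  omega

/-- `C` is a real linear space (it coincides with its linear span) and its
dimension equals `2 * C(d,4) + 3 * C(d,3) + C(d,2) = d²(d²-1)/12`. -/
theorem stmt3 (d : ℕ) (hd : 1 ≤ d) :
    (Submodule.span ℝ (setC d) : Set ((Fin d → ℝ) → Matrix (Fin d) (Fin d) ℝ)) = setC d ∧
    Module.finrank ℝ (Submodule.span ℝ (setC d)) =
      2 * d.choose 4 + 3 * d.choose 3 + d.choose 2 ∧
    2 * d.choose 4 + 3 * d.choose 3 + d.choose 2 = d ^ 2 * (d ^ 2 - 1) / 12 := by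
  refine ⟨?_, ?_, ?_⟩
  · rw [setC_eq_map d, Submodule.span_eq]
  · rw [setC_eq_map d, Submodule.span_eq]
    rw [← LinearEquiv.finrank_eq (Submodule.equivMapOfInjective (Emap d) (Emap_inj d) (Msub d))]
    exact finrank_M d
  · exact arith2 d
end
end

section
/- Let d ≥ 1 and m = binomial(d,2). The linear space K = { H ∈ S^m : c_H(x) = 0 for all x ∈ ℝ^d } has dimension binomial(d,4) (with the convention binomial(d,4) = 0 for d < 4). -/
open Matrix

namespace Stmt4
variable {d : ℕ}

noncomputable def eext (a u : Fin d) (g : PairIdx d → ℝ) : ℝ :=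
  if h : a < u then g ⟨(a,u), h⟩ else if h' : u < a then -g ⟨(u,a), h'⟩ else 0

lemma sum_skew (g : PairIdx d → ℝ) (a u : Fin d) :
    ∑ p : PairIdx d, g p * skewBasis p a u = eext a u g := by
  rcases lt_trichotomy a u with h | h | h
  · rw [eext, dif_pos h, Finset.sum_eq_single (⟨(a,u),h⟩ : PairIdx d)]
    · simp [skewBasis, Matrix.single, Matrix.sub_apply, h.ne, h.ne']
    · intro p _ hp
      have : ¬ (p.1.1 = a ∧ p.1.2 = u) := by
        rintro ⟨h1, h2⟩; exact hp (Subtype.ext (Prod.ext h1 h2))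
      have h2 : ¬ (p.1.2 = a ∧ p.1.1 = u) := by
        rintro ⟨h1, h2⟩; have := p.2; rw [h1, h2] at this; exact absurd h (not_lt.2 this.le)
      simp only [skewBasis, Matrix.sub_apply, Matrix.single, Matrix.of_apply]
      rw [if_neg this, if_neg h2]; ring
    · simp
  · subst h
    rw [eext, dif_neg (lt_irrefl a), dif_neg (lt_irrefl a)]
    apply Finset.sum_eq_zero
    intro p _
    have h2 : ¬ (p.1.1 = a ∧ p.1.2 = a) := by
      rintro ⟨h1, h2⟩; have := p.2; rw [h1, h2] at this; exact lt_irrefl a this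
    have h3 : ¬ (p.1.2 = a ∧ p.1.1 = a) := by
      rintro ⟨h1, h2⟩; have := p.2; rw [h1, h2] at this; exact lt_irrefl a this
    simp only [skewBasis, Matrix.sub_apply, Matrix.single, Matrix.of_apply]
    rw [if_neg h2, if_neg h3]; ring
  · rw [eext, dif_neg (not_lt.2 h.le), dif_pos h, Finset.sum_eq_single (⟨(u,a),h⟩ : PairIdx d)]
    · simp [skewBasis, Matrix.single, Matrix.sub_apply, h.ne, h.ne']
    · intro p _ hp
      have h1 : ¬ (p.1.1 = a ∧ p.1.2 = u) := by
        rintro ⟨h1, h2⟩; have := p.2; rw [h1, h2] at this; exact absurd h (not_lt.2 this.le)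
      have h2 : ¬ (p.1.2 = a ∧ p.1.1 = u) := by
        rintro ⟨h2, h1⟩; exact hp (Subtype.ext (Prod.ext h1 h2))
      simp only [skewBasis, Matrix.sub_apply, Matrix.single, Matrix.of_apply]
      rw [if_neg h1, if_neg h2]; ring
    · simp

noncomputable def tens (H : Matrix (PairIdx d) (PairIdx d) ℝ) (a u b v : Fin d) : ℝ :=
  eext a u (fun p => eext b v (fun q => H p q))

lemma eext_mul (a u : Fin d) (g : PairIdx d → ℝ) (c : ℝ) :
    eext a u (fun p => g p * c) = eext a u g * c := by
  unfold eext; split_ifs <;> ring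

lemma sum_skew_vec (g : PairIdx d → ℝ) (a : Fin d) (x : Fin d → ℝ) :
    ∑ p : PairIdx d, g p * (∑ c, skewBasis p a c * x c) = ∑ u, eext a u g * x u := by
  simp only [Finset.mul_sum, ← mul_assoc]
  rw [Finset.sum_comm]
  exact Finset.sum_congr rfl fun u _ => by rw [← Finset.sum_mul, sum_skew]

lemma cH_apply (H : Matrix (PairIdx d) (PairIdx d) ℝ) (x : Fin d → ℝ) (a b : Fin d) :
    cH H x a b = ∑ u, ∑ v, tens H a u b v * (x u * x v) := by
  have hent : ∀ p q : PairIdx d,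
      (skewBasis p * Matrix.vecMulVec x x * (skewBasis q)ᵀ) a b
      = (∑ c, skewBasis p a c * x c) * (∑ e, skewBasis q b e * x e) := by
    intro p q
    rw [Finset.sum_mul_sum]
    simp only [Matrix.mul_apply, Matrix.vecMulVec_apply, Matrix.transpose_apply, Finset.sum_mul]
    rw [Finset.sum_comm]
    exact Finset.sum_congr rfl fun c _ => Finset.sum_congr rfl fun e _ => by ring
  have h1 : cH H x a b = ∑ p : PairIdx d, ∑ q : PairIdx d,
      H p q * ((∑ c, skewBasis p a c * x c) * (∑ e, skewBasis q b e * x e)) := by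
    simp only [cH, Matrix.sum_apply, Matrix.smul_apply, smul_eq_mul, hent]
  rw [h1]
  have h2 : ∀ p : PairIdx d, ∑ q : PairIdx d,
      H p q * ((∑ c, skewBasis p a c * x c) * (∑ e, skewBasis q b e * x e))
      = (∑ v, eext b v (fun q => H p q) * x v) * (∑ c, skewBasis p a c * x c) := by
    intro p
    rw [← sum_skew_vec (fun q => H p q) b x, Finset.sum_mul]
    exact Finset.sum_congr rfl fun q _ => by ring
  simp only [h2]
  have h3 : ∑ p : PairIdx d, (∑ v, eext b v (fun q => H p q) * x v) * (∑ c, skewBasis p a c * x c)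
      = ∑ v, ∑ p : PairIdx d, (eext b v (fun q => H p q) * x v) * (∑ c, skewBasis p a c * x c) := by
    simp only [Finset.sum_mul]
    exact Finset.sum_comm
  rw [h3]
  have h4 : ∀ v, ∑ p : PairIdx d, (eext b v (fun q => H p q) * x v) * (∑ c, skewBasis p a c * x c)
      = ∑ u, (tens H a u b v * x v) * x u := by
    intro v
    rw [sum_skew_vec (fun p => eext b v (fun q => H p q) * x v) a x]
    exact Finset.sum_congr rfl fun u _ => by rw [eext_mul]; rfl
  simp only [h4]
  rw [Finset.sum_comm]
  exact Finset.sum_congr rfl fun u _ => Finset.sum_congr rfl fun v _ => by ring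


lemma key_iff (H : Matrix (PairIdx d) (PairIdx d) ℝ) :
    (∀ x, cH H x = 0) ↔ ∀ a u b v, tens H a u b v + tens H a v b u = 0 := by
  constructor
  · intro h a u b v
    have hx : ∀ x : Fin d → ℝ, ∑ u', ∑ v', tens H a u' b v' * (x u' * x v') = 0 := by
      intro x
      rw [← cH_apply, h x]; rfl
    have hdiag : ∀ w, tens H a w b w = 0 := by
      intro w
      have := hx (Pi.single w 1)
      simpa [Pi.single_apply, mul_ite, mul_one, mul_zero, ite_mul, one_mul, zero_mul,
        Finset.sum_ite_eq', Finset.sum_ite_eq] using this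
    have h2 := hx (Pi.single u 1 + Pi.single v 1)
    simp only [Pi.add_apply, Pi.single_apply, mul_add, add_mul, mul_ite, mul_one, mul_zero,
      ite_mul, one_mul, zero_mul, Finset.sum_add_distrib, Finset.sum_ite_eq',
      Finset.sum_ite_eq, Finset.mem_univ, if_true] at h2
    have d1 := hdiag u
    have d2 := hdiag v
    linarith
  · intro h x
    ext a b
    rw [cH_apply, Matrix.zero_apply]
    have key : (∑ u, ∑ v, tens H a u b v * (x u * x v))
        = -(∑ u, ∑ v, tens H a u b v * (x u * x v)) := by
      calc (∑ u, ∑ v, tens H a u b v * (x u * x v))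
          = ∑ v, ∑ u, tens H a u b v * (x u * x v) := Finset.sum_comm
        _ = ∑ v, ∑ u, -(tens H a v b u * (x v * x u)) := by
            refine Finset.sum_congr rfl fun v _ => Finset.sum_congr rfl fun u _ => ?_
            linear_combination (x u * x v) * h a v b u
        _ = -(∑ u, ∑ v, tens H a u b v * (x u * x v)) := by
            simp [← Finset.sum_neg_distrib]
    linarith

lemma eext_flip (a u : Fin d) (g : PairIdx d → ℝ) : eext u a g = - eext a u g := by
  unfold eext
  split_ifs with h1 h2
  · exact absurd h2 (not_lt.2 h1.le)
  · ring
  · ring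
  · ring

lemma eext_neg (a u : Fin d) (g : PairIdx d → ℝ) :
    eext a u (fun p => -g p) = - eext a u g := by
  unfold eext; split_ifs <;> ring

lemma f12 (H : Matrix (PairIdx d) (PairIdx d) ℝ) (a u b v : Fin d) :
    tens H u a b v = - tens H a u b v := by
  unfold tens; rw [eext_flip]

lemma f34 (H : Matrix (PairIdx d) (PairIdx d) ℝ) (a u b v : Fin d) :
    tens H a u v b = - tens H a u b v := by
  unfold tens
  calc eext a u (fun p => eext v b fun q => H p q)
      = eext a u (fun p => -eext b v fun q => H p q) := by
        refine congrArg _ (funext fun p => ?_)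
        rw [eext_flip]
    _ = - eext a u (fun p => eext b v fun q => H p q) := eext_neg _ _ _

lemma psw (H : Matrix (PairIdx d) (PairIdx d) ℝ) (hH : H.IsSymm) (a u b v : Fin d) :
    tens H b v a u = tens H a u b v := by
  have hs : ∀ p q : PairIdx d, H q p = H p q := fun p q => hH.apply p q
  simp only [tens, eext]
  split_ifs <;> first | rfl | (rw [hs]) | (rw [neg_inj]; rw [hs]) | (rw [neg_neg, hs]) | simp [hs]

section Flips
variable (H : Matrix (PairIdx d) (PairIdx d) ℝ) (hH : H.IsSymm)
  (hc : ∀ a u b v : Fin d, tens H a u b v + tens H a v b u = 0)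

include hc in
lemma f24 (a u b v : Fin d) : tens H a v b u = - tens H a u b v := by
  have := hc a u b v; linarith

include hH hc

lemma f13 (a u b v : Fin d) : tens H b u a v = - tens H a u b v := by
  rw [← psw H hH b u a v]; exact f24 H hc a u b v

lemma f23 (a u b v : Fin d) : tens H a b u v = - tens H a u b v := by
  have e1 := f34 H a b u v
  have e2 := f24 H hc a u v b
  have e3 := f34 H a u b v
  linarith

lemma f14 (a u b v : Fin d) : tens H v u b a = - tens H a u b v := by
  have e1 := f13 H hH hc b u v a
  have e2 := f34 H b u a v
  have e3 := f13 H hH hc a u b v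
  linarith

lemma swap_flip (x y : Fin 4) (hxy : x ≠ y) (v : Fin 4 → Fin d) :
    tens H (v (Equiv.swap x y 0)) (v (Equiv.swap x y 1))
      (v (Equiv.swap x y 2)) (v (Equiv.swap x y 3))
    = - tens H (v 0) (v 1) (v 2) (v 3) := by
  fin_cases x <;> fin_cases y <;>
    simp (config := { decide := true }) only [Equiv.swap_apply_def, if_true, if_false] <;>
    first
      | (exfalso; exact hxy rfl)
      | exact f12 H (v 0) (v 1) (v 2) (v 3)
      | exact f13 H hH hc (v 0) (v 1) (v 2) (v 3)
      | exact f14 H hH hc (v 0) (v 1) (v 2) (v 3)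
      | exact f23 H hH hc (v 0) (v 1) (v 2) (v 3)
      | exact f24 H hc (v 0) (v 1) (v 2) (v 3)
      | exact f34 H (v 0) (v 1) (v 2) (v 3)

lemma perm_flip (σ : Equiv.Perm (Fin 4)) : ∀ v : Fin 4 → Fin d,
    tens H (v (σ 0)) (v (σ 1)) (v (σ 2)) (v (σ 3))
    = ((Equiv.Perm.sign σ : ℤ) : ℝ) * tens H (v 0) (v 1) (v 2) (v 3) := by
  refine Equiv.Perm.swap_induction_on σ (fun v => by simp) (fun f x y hxy hIH v => ?_)
  have e1 : ∀ i : Fin 4, v ((Equiv.swap x y * f) i) = (v ∘ Equiv.swap x y) (f i) := by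
    intro i; rw [Equiv.Perm.mul_apply]; rfl
  rw [e1 0, e1 1, e1 2, e1 3, hIH (v ∘ Equiv.swap x y)]
  have e2 := swap_flip H hH hc x y hxy v
  simp only [Function.comp_apply]
  rw [e2, Equiv.Perm.sign_mul, Equiv.Perm.sign_swap hxy]
  push_cast
  ring

lemma tens_zero_of_rep (v : Fin 4 → Fin d) (i j : Fin 4) (hij : i ≠ j) (hv : v i = v j) :
    tens H (v 0) (v 1) (v 2) (v 3) = 0 := by
  have hvv : ∀ k, v (Equiv.swap i j k) = v k := by
    intro k
    rcases eq_or_ne k i with rfl | hki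
    · rw [Equiv.swap_apply_left, hv]
    rcases eq_or_ne k j with rfl | hkj
    · rw [Equiv.swap_apply_right, hv]
    · rw [Equiv.swap_apply_of_ne_of_ne hki hkj]
  have h2 := swap_flip H hH hc i j hij v
  rw [hvv 0, hvv 1, hvv 2, hvv 3] at h2
  linarith

end Flips

abbrev S4 (d : ℕ) := {s : Finset (Fin d) // s.card = 4}

noncomputable def srt (s : S4 d) : Fin 4 → Fin d := fun i => s.1.orderEmbOfFin s.2 i

lemma srt_mem (s : S4 d) (i : Fin 4) : srt s i ∈ s.1 := Finset.orderEmbOfFin_mem _ _ _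
lemma srt_inj (s : S4 d) : Function.Injective (srt s) := (s.1.orderEmbOfFin s.2).injective

noncomputable def Dmat (v : Fin 4 → Fin d) (s : S4 d) : Matrix (Fin 4) (Fin 4) ℝ :=
  Matrix.of fun r c => if srt s r = v c then 1 else 0

noncomputable def Dd (v : Fin 4 → Fin d) (s : S4 d) : ℝ := (Dmat v s).det

lemma Dd_comp (σ : Equiv.Perm (Fin 4)) (v : Fin 4 → Fin d) (s : S4 d) :
    Dd (v ∘ σ) s = ((Equiv.Perm.sign σ : ℤ) : ℝ) * Dd v s := by
  have h : Dmat (v ∘ σ) s = (Dmat v s).submatrix id σ := rfl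
  rw [Dd, h, Matrix.det_permute']
  norm_num [Dd]

lemma Dd_zero_of_rep (v : Fin 4 → Fin d) (s : S4 d) (i j : Fin 4) (hij : i ≠ j)
    (hv : v i = v j) : Dd v s = 0 :=
  Matrix.det_zero_of_column_eq hij (fun k => by simp [Dmat, hv])

lemma Dd_zero_of_not_mem (v : Fin 4 → Fin d) (s : S4 d) (a : Fin d) (ha : a ∈ s.1)
    (ha' : ∀ c, v c ≠ a) : Dd v s = 0 := by
  apply Matrix.det_eq_zero_of_row_eq_zero ((s.1.orderIsoOfFin s.2).symm ⟨a, ha⟩)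
  intro c
  have key : srt s ((s.1.orderIsoOfFin s.2).symm ⟨a, ha⟩) = a := by
    have := Finset.coe_orderIsoOfFin_apply s.1 s.2 ((s.1.orderIsoOfFin s.2).symm ⟨a, ha⟩)
    rw [OrderIso.apply_symm_apply] at this
    exact this.symm
  simp only [Dmat, Matrix.of_apply, key, ite_eq_right_iff]
  intro h
  exact absurd h.symm (ha' c)

lemma Dd_self (s : S4 d) : Dd (srt s) s = 1 := by
  have h : Dmat (srt s) s = 1 := by
    ext r c
    simp only [Dmat, Matrix.of_apply, Matrix.one_apply]
    by_cases h : r = c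
    · subst h; simp
    · rw [if_neg (fun hh => h (srt_inj s hh)), if_neg h]
  rw [Dd, h, Matrix.det_one]

noncomputable def Tmap (f : S4 d → ℝ) : Matrix (PairIdx d) (PairIdx d) ℝ :=
  fun p q => ∑ s : S4 d, f s * Dd ![p.1.1, p.1.2, q.1.1, q.1.2] s

lemma Dd_sw01 (a u b v : Fin d) (s : S4 d) : Dd ![u,a,b,v] s = - Dd ![a,u,b,v] s := by
  rw [show (![u,a,b,v] : Fin 4 → Fin d) = ![a,u,b,v] ∘ Equiv.swap 0 1 from by
    funext c; fin_cases c <;> rfl, Dd_comp, Equiv.Perm.sign_swap (by decide)]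
  norm_num

lemma Dd_sw23 (a u b v : Fin d) (s : S4 d) : Dd ![a,u,v,b] s = - Dd ![a,u,b,v] s := by
  rw [show (![a,u,v,b] : Fin 4 → Fin d) = ![a,u,b,v] ∘ Equiv.swap 2 3 from by
    funext c; fin_cases c <;> rfl, Dd_comp, Equiv.Perm.sign_swap (by decide)]
  norm_num

lemma Dd_sw13 (a u b v : Fin d) (s : S4 d) : Dd ![a,v,b,u] s = - Dd ![a,u,b,v] s := by
  rw [show (![a,v,b,u] : Fin 4 → Fin d) = ![a,u,b,v] ∘ Equiv.swap 1 3 from by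
    funext c; fin_cases c <;> rfl, Dd_comp, Equiv.Perm.sign_swap (by decide)]
  norm_num

lemma Dd_pairswap (a u b v : Fin d) (s : S4 d) : Dd ![b,v,a,u] s = Dd ![a,u,b,v] s := by
  rw [show (![b,v,a,u] : Fin 4 → Fin d) = ![a,v,b,u] ∘ Equiv.swap 0 2 from by
    funext c; fin_cases c <;> rfl, Dd_comp, Equiv.Perm.sign_swap (by decide), Dd_sw13]
  norm_num

lemma eext_pos {a u : Fin d} (h : a < u) (g : PairIdx d → ℝ) : eext a u g = g ⟨(a,u), h⟩ :=
  dif_pos h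

lemma eext_neg' {a u : Fin d} (h : u < a) (g : PairIdx d → ℝ) : eext a u g = -g ⟨(u,a), h⟩ := by
  rw [eext, dif_neg (not_lt.2 h.le), dif_pos h]

lemma eext_diag (a : Fin d) (g : PairIdx d → ℝ) : eext a a g = 0 := by
  rw [eext, dif_neg (lt_irrefl a), dif_neg (lt_irrefl a)]

lemma tens_T (f : S4 d → ℝ) (a u b v : Fin d) :
    tens (Tmap f) a u b v = ∑ s : S4 d, f s * Dd ![a,u,b,v] s := by
  have z01 : ∀ (a b v : Fin d), ∑ s : S4 d, f s * Dd ![a,a,b,v] s = 0 := fun a b v =>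
    Finset.sum_eq_zero fun s _ => by
      rw [Dd_zero_of_rep ![a,a,b,v] s 0 1 (by decide) rfl, mul_zero]
  have z23 : ∀ (a u b : Fin d), ∑ s : S4 d, f s * Dd ![a,u,b,b] s = 0 := fun a u b =>
    Finset.sum_eq_zero fun s _ => by
      rw [Dd_zero_of_rep ![a,u,b,b] s 2 3 (by decide) rfl, mul_zero]
  rcases lt_trichotomy a u with hau | rfl | hau
  · rw [tens, eext_pos hau]
    rcases lt_trichotomy b v with hbv | rfl | hbv
    · rw [eext_pos hbv]; rfl
    · rw [eext_diag]; exact (z23 a u b).symm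
    · rw [eext_neg' hbv]
      show -(∑ s : S4 d, f s * Dd ![a,u,v,b] s) = _
      rw [← Finset.sum_neg_distrib]
      exact Finset.sum_congr rfl fun s _ => by rw [Dd_sw23]; ring
  · rw [tens, eext_diag]; exact (z01 a b v).symm
  · rw [tens, eext_neg' hau]
    rcases lt_trichotomy b v with hbv | rfl | hbv
    · rw [eext_pos hbv]
      show -(∑ s : S4 d, f s * Dd ![u,a,b,v] s) = _
      rw [← Finset.sum_neg_distrib]
      exact Finset.sum_congr rfl fun s _ => by rw [Dd_sw01]; ring
    · rw [eext_diag, neg_zero]; exact (z23 a u b).symm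
    · rw [eext_neg' hbv]
      show -(-(∑ s : S4 d, f s * Dd ![u,a,v,b] s)) = _
      rw [neg_neg]
      exact Finset.sum_congr rfl fun s _ => by rw [Dd_sw01, Dd_sw23]; ring

lemma Tmap_symm (f : S4 d → ℝ) : (Tmap f).IsSymm := by
  apply Matrix.IsSymm.ext
  intro q p
  show Tmap f p q = Tmap f q p
  exact Finset.sum_congr rfl fun s _ => by rw [← Dd_pairswap p.1.1 p.1.2 q.1.1 q.1.2]

lemma Tmap_cH (f : S4 d → ℝ) : ∀ x, cH (Tmap f) x = 0 := by
  rw [key_iff]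
  intro a u b v
  rw [tens_T, tens_T]
  have e : ∑ s : S4 d, f s * Dd ![a,v,b,u] s = -∑ s : S4 d, f s * Dd ![a,u,b,v] s := by
    rw [← Finset.sum_neg_distrib]
    exact Finset.sum_congr rfl fun s _ => by rw [Dd_sw13]; ring
  rw [e]; ring

lemma srt_strictMono (s : S4 d) : StrictMono (srt s) := (s.1.orderEmbOfFin s.2).strictMono

lemma exists_not_mem {s t : S4 d} (hst : s ≠ t) : ∃ x ∈ s.1, x ∉ t.1 := by
  by_contra hcon
  push_neg at hcon
  have hsub : s.1 ⊆ t.1 := hcon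
  have := Finset.eq_of_subset_of_card_le hsub (by rw [s.2, t.2])
  exact hst (Subtype.ext this)

lemma main_rep (H : Matrix (PairIdx d) (PairIdx d) ℝ) (hH : H.IsSymm)
    (hc : ∀ a u b v : Fin d, tens H a u b v + tens H a v b u = 0) (w : Fin 4 → Fin d) :
    ∑ s : S4 d, tens H (srt s 0) (srt s 1) (srt s 2) (srt s 3) * Dd w s
    = tens H (w 0) (w 1) (w 2) (w 3) := by
  by_cases hw : Function.Injective w
  · have hcard : (Finset.image w Finset.univ).card = 4 := by
      rw [Finset.card_image_of_injective _ hw, Finset.card_univ, Fintype.card_fin]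
    set s₀ : S4 d := ⟨Finset.image w Finset.univ, hcard⟩ with hs₀
    have hmem : ∀ c, w c ∈ s₀.1 := fun c => Finset.mem_image_of_mem _ (Finset.mem_univ c)
    have hsrtτ : ∀ c, srt s₀ ((s₀.1.orderIsoOfFin s₀.2).symm ⟨w c, hmem c⟩) = w c := by
      intro c
      have h1 := Finset.coe_orderIsoOfFin_apply s₀.1 s₀.2 ((s₀.1.orderIsoOfFin s₀.2).symm ⟨w c, hmem c⟩)
      rw [OrderIso.apply_symm_apply] at h1
      exact h1.symm
    have hτinj : Function.Injective (fun c => (s₀.1.orderIsoOfFin s₀.2).symm ⟨w c, hmem c⟩) := by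
      intro c c' h
      apply hw
      rw [← hsrtτ c, ← hsrtτ c']
      simp only at h
      rw [h]
    let σ : Equiv.Perm (Fin 4) :=
      Equiv.ofBijective _ (Finite.injective_iff_bijective.1 hτinj)
    have hσ : ∀ c, srt s₀ (σ c) = w c := hsrtτ
    rw [Finset.sum_eq_single s₀]
    · have h1 : Dd w s₀ = ((Equiv.Perm.sign σ : ℤ) : ℝ) := by
        have hww : w = srt s₀ ∘ σ := funext fun c => (hσ c).symm
        rw [hww, Dd_comp, Dd_self, mul_one]
      have h2 : tens H (w 0) (w 1) (w 2) (w 3)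
          = ((Equiv.Perm.sign σ : ℤ) : ℝ)
            * tens H (srt s₀ 0) (srt s₀ 1) (srt s₀ 2) (srt s₀ 3) := by
        have h3 := perm_flip H hH hc σ (srt s₀)
        rw [hσ 0, hσ 1, hσ 2, hσ 3] at h3
        exact h3
      rw [h1, h2]
      ring
    · intro s _ hs
      obtain ⟨x, hx1, hx2⟩ := exists_not_mem hs
      rw [Dd_zero_of_not_mem w s x hx1 (fun c hcc => hx2 (hcc ▸ hmem c)), mul_zero]
    · intro h; exact absurd (Finset.mem_univ s₀) h
  · obtain ⟨i, j, hv, hij⟩ : ∃ i j, w i = w j ∧ i ≠ j := by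
      unfold Function.Injective at hw
      push_neg at hw
      obtain ⟨i, j, h1, h2⟩ := hw
      exact ⟨i, j, h1, h2⟩
    rw [tens_zero_of_rep H hH hc w i j hij hv]
    exact Finset.sum_eq_zero fun s _ => by rw [Dd_zero_of_rep w s i j hij hv, mul_zero]

lemma K_sub (H : Matrix (PairIdx d) (PairIdx d) ℝ) (hH : H.IsSymm) (hcH : ∀ x, cH H x = 0) :
    Tmap (fun s => tens H (srt s 0) (srt s 1) (srt s 2) (srt s 3)) = H := by
  have hc := (key_iff H).1 hcH
  funext p q
  have h1 := main_rep H hH hc ![p.1.1, p.1.2, q.1.1, q.1.2]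
  have h2 : Tmap (fun s => tens H (srt s 0) (srt s 1) (srt s 2) (srt s 3)) p q
      = tens H p.1.1 p.1.2 q.1.1 q.1.2 := h1
  rw [h2, tens, eext_pos p.2, eext_pos q.2]

lemma Tmap_inj (f : S4 d → ℝ) (h : Tmap f = 0) : f = 0 := by
  funext s
  have hlt1 : srt s 0 < srt s 1 := srt_strictMono s (by decide)
  have hlt2 : srt s 2 < srt s 3 := srt_strictMono s (by decide)
  have h0 : Tmap f ⟨(srt s 0, srt s 1), hlt1⟩ ⟨(srt s 2, srt s 3), hlt2⟩ = 0 := by rw [h]; rfl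
  have hvec : (![srt s 0, srt s 1, srt s 2, srt s 3] : Fin 4 → Fin d) = srt s := by
    funext c; fin_cases c <;> rfl
  have h3 : Tmap f ⟨(srt s 0, srt s 1), hlt1⟩ ⟨(srt s 2, srt s 3), hlt2⟩
      = ∑ s' : S4 d, f s' * Dd (srt s) s' := by
    show (∑ s' : S4 d, f s' * Dd ![srt s 0, srt s 1, srt s 2, srt s 3] s') = _
    rw [hvec]
  rw [h3, Finset.sum_eq_single s] at h0
  · rw [Dd_self, mul_one] at h0; exact h0
  · intro s' _ hs'
    obtain ⟨x, hx1, hx2⟩ := exists_not_mem hs'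
    rw [Dd_zero_of_not_mem (srt s) s' x hx1 (fun c hcc => hx2 (hcc ▸ srt_mem s c)), mul_zero]
  · intro hns; exact absurd (Finset.mem_univ s) hns

noncomputable def Tlin : (S4 d → ℝ) →ₗ[ℝ] Matrix (PairIdx d) (PairIdx d) ℝ where
  toFun := Tmap
  map_add' f g := by
    funext p q
    show (∑ s : S4 d, (f s + g s) * Dd ![p.1.1, p.1.2, q.1.1, q.1.2] s)
      = (∑ s : S4 d, f s * Dd ![p.1.1, p.1.2, q.1.1, q.1.2] s)
        + (∑ s : S4 d, g s * Dd ![p.1.1, p.1.2, q.1.1, q.1.2] s)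
    rw [← Finset.sum_add_distrib]
    exact Finset.sum_congr rfl fun s _ => by ring
  map_smul' c f := by
    funext p q
    show (∑ s : S4 d, (c * f s) * Dd ![p.1.1, p.1.2, q.1.1, q.1.2] s)
      = c * ∑ s : S4 d, f s * Dd ![p.1.1, p.1.2, q.1.1, q.1.2] s
    rw [Finset.mul_sum]
    exact Finset.sum_congr rfl fun s _ => by ring

end Stmt4

/-- The linear space `K = { H ∈ S^m : c_H ≡ 0 }`, with `m = choose d 2`,
has dimension `choose d 4`. (Since `K` is a linear subspace, we express it as the linear
span of the corresponding set.) -/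
theorem stmt4 (d : ℕ) (hd : 1 ≤ d) :
    Module.finrank ℝ (Submodule.span ℝ
      {H : Matrix (PairIdx d) (PairIdx d) ℝ | H.IsSymm ∧ ∀ x, cH H x = 0}) =
      d.choose 4 := by
  classical
  have hinj : Function.Injective (Stmt4.Tlin (d := d)) :=
    LinearMap.ker_eq_bot.1 (LinearMap.ker_eq_bot'.2 fun f hf => Stmt4.Tmap_inj f hf)
  have hset : {H : Matrix (PairIdx d) (PairIdx d) ℝ | H.IsSymm ∧ ∀ x, cH H x = 0}
      = (LinearMap.range (Stmt4.Tlin (d := d)) : Set _) := by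
    ext H
    constructor
    · rintro ⟨hH, hcH⟩
      exact ⟨fun s => Stmt4.tens H (Stmt4.srt s 0) (Stmt4.srt s 1) (Stmt4.srt s 2) (Stmt4.srt s 3),
        Stmt4.K_sub H hH hcH⟩
    · rintro ⟨f, rfl⟩
      exact ⟨Stmt4.Tmap_symm f, Stmt4.Tmap_cH f⟩
  rw [hset, Submodule.span_eq (LinearMap.range Stmt4.Tlin),
    LinearMap.finrank_range_of_inj hinj, Module.finrank_pi, Fintype.card_finset_len,
    Fintype.card_fin]
end

section
/- Let d ≥ 1. Let D be the space of maps c : ℝ^d → S^d whose entries are homogeneous polynomials of degree 2, and let E be the space of maps f : ℝ^d → ℝ^d whose components are homogeneous polynomials of degree 3. Then the linear map T : D → E defined by (T c)(x) = c(x) x is surjective. In particular, for all indices i, j, k, l ∈ {1,…,d} there exists c ∈ D with c(x) x = x_i x_j x_k e_l for all x; one such c is c(x) = x_i ( x_j E_{kl} + x_k E_{jl} − x_l E_{jk} ) / 2, where E_{st} = e_s e_t^⊤ + e_t e_s^⊤. -/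
open Matrix

/-- `E_{st} = e_s e_tᵀ + e_t e_sᵀ`. -/
noncomputable def Emat {d : ℕ} (s t : Fin d) : Matrix (Fin d) (Fin d) ℝ :=
  Matrix.single s t 1 + Matrix.single t s 1

section Aux
open MvPolynomial

lemma deg_single {d : ℕ} (i : Fin d) : (Finsupp.single i 1 : Fin d →₀ ℕ).degree = 1 := by
  simp [Finsupp.degree_single]

lemma deg_step {d : ℕ} (m : Fin d →₀ ℕ) (n : ℕ) (h : m.degree = n + 1) :
    ∃ (i : Fin d) (m' : Fin d →₀ ℕ), m = m' + Finsupp.single i 1 ∧ m'.degree = n := by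
  have hm : m ≠ 0 := by
    intro h0; rw [h0, map_zero] at h; omega
  obtain ⟨i, hi⟩ : ∃ i, m i ≠ 0 := by
    by_contra hc
    push_neg at hc
    exact hm (Finsupp.ext fun a => hc a)
  refine ⟨i, m - Finsupp.single i 1, ?_, ?_⟩
  · ext a
    rcases eq_or_ne a i with rfl | ha
    · simp [Finsupp.single_apply]
      omega
    · simp [Finsupp.single_apply, Ne.symm ha]
  · have : (m - Finsupp.single i 1 + Finsupp.single i 1) = m := by
      ext a
      rcases eq_or_ne a i with rfl | ha
      · simp [Finsupp.single_apply]; omega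
      · simp [Finsupp.single_apply, Ne.symm ha]
    have h2 : (m - Finsupp.single i 1).degree + (Finsupp.single i 1 : Fin d →₀ ℕ).degree = m.degree := by
      rw [← this]
      simp [Finsupp.degree_eq_weight_one]
    rw [deg_single, h] at h2
    omega

lemma deg3 {d : ℕ} (m : Fin d →₀ ℕ) (h : m.degree = 3) :
    ∃ i j k : Fin d, m = Finsupp.single i 1 + Finsupp.single j 1 + Finsupp.single k 1 := by
  obtain ⟨k, m2, rfl, h2⟩ := deg_step m 2 h
  obtain ⟨j, m1, rfl, h1⟩ := deg_step m2 1 h2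
  obtain ⟨i, m0, rfl, h0⟩ := deg_step m1 0 h1
  rw [Finsupp.degree_eq_zero_iff] at h0
  exact ⟨i, j, k, by rw [h0, zero_add]⟩

lemma eval_mon3 {d : ℕ} (i j k : Fin d) (a : ℝ) (x : Fin d → ℝ) :
    MvPolynomial.eval x (MvPolynomial.monomial
      (Finsupp.single i 1 + Finsupp.single j 1 + Finsupp.single k 1) a)
      = a * (x i * x j * x k) := by
  have : (MvPolynomial.monomial
      (Finsupp.single i 1 + Finsupp.single j 1 + Finsupp.single k 1) a : MvPolynomial (Fin d) ℝ)
      = MvPolynomial.C a * MvPolynomial.X i * MvPolynomial.X j * MvPolynomial.X k := by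
    rw [MvPolynomial.C_apply, MvPolynomial.X, MvPolynomial.X, MvPolynomial.X,
      MvPolynomial.monomial_mul, MvPolynomial.monomial_mul, MvPolynomial.monomial_mul]
    rw [zero_add, mul_one, mul_one, mul_one]
  rw [this]
  simp
  ring

lemma Emat_symm {d : ℕ} (s t : Fin d) : (Emat s t).IsSymm := by
  unfold Matrix.IsSymm Emat
  ext a b
  simp [Matrix.single, Matrix.transpose_apply, add_comm, and_comm]

def InS (d : ℕ) (f : (Fin d → ℝ) → (Fin d → ℝ)) : Prop :=
  ∃ c : (Fin d → ℝ) → Matrix (Fin d) (Fin d) ℝ,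
    (∀ x, (c x).IsSymm) ∧
    (∀ i j, IsHomPolyFun d 2 (fun x => c x i j)) ∧
    (∀ x, (c x).mulVec x = f x)

lemma InS_zero (d : ℕ) : InS d 0 := by
  refine ⟨fun _ => 0, fun _ => Matrix.isSymm_zero, fun i j => ⟨0, isHomogeneous_zero _ _ _, by simp⟩,
    fun x => by simp⟩

lemma InS_add {d : ℕ} {f g : (Fin d → ℝ) → (Fin d → ℝ)} (hf : InS d f) (hg : InS d g) :
    InS d (f + g) := by
  obtain ⟨c, hc1, hc2, hc3⟩ := hf
  obtain ⟨e, he1, he2, he3⟩ := hg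
  refine ⟨fun x => c x + e x, fun x => (hc1 x).add (he1 x), fun i j => ?_, fun x => ?_⟩
  · obtain ⟨P, hP, hPe⟩ := hc2 i j
    obtain ⟨Q, hQ, hQe⟩ := he2 i j
    exact ⟨P + Q, hP.add hQ, fun x => by simp [Matrix.add_apply, hPe x, hQe x]⟩
  · simp [Matrix.add_mulVec, hc3 x, he3 x]

lemma InS_sum {d : ℕ} {α : Type*} (s : Finset α) (g : α → (Fin d → ℝ) → (Fin d → ℝ))
    (h : ∀ a ∈ s, InS d (g a)) : InS d (∑ a ∈ s, g a) := by
  classical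
  induction s using Finset.induction with
  | empty => simpa using InS_zero d
  | insert _ _ hx ih =>
    rw [Finset.sum_insert hx]
    exact InS_add (h _ (Finset.mem_insert_self _ _))
      (ih fun a ha => h a (Finset.mem_insert_of_mem ha))

lemma std_mulVec {d : ℕ} (s t : Fin d) (a : ℝ) (x : Fin d → ℝ) :
    (Matrix.single s t a).mulVec x = Pi.single s (a * x t) := by
  ext r
  simp [Matrix.mulVec, dotProduct, Matrix.single, Pi.single_apply, ite_and, eq_comm]

lemma witness {d : ℕ} (i j k l : Fin d) (x : Fin d → ℝ) :
      (((1 : ℝ) / 2) • (x i • (x j • Emat k l + x k • Emat j l - x l • Emat j k))).mulVec x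
        = (x i * x j * x k) • (Pi.single l 1 : Fin d → ℝ) := by
  ext r
  simp only [Emat, smul_mulVec, add_mulVec, sub_mulVec, std_mulVec, one_mul,
    Pi.smul_apply, Pi.add_apply, Pi.sub_apply, Pi.single_apply, smul_eq_mul]
  rcases eq_or_ne r l with h | h <;> rcases eq_or_ne r j with h2 | h2 <;>
    rcases eq_or_ne r k with h3 | h3 <;> subst_vars <;> simp_all
  all_goals first | ring1 | (right; ring1)

lemma InS_gen {d : ℕ} (a : ℝ) (i j k l : Fin d) :
    InS d (fun x => (a * (x i * x j * x k)) • (Pi.single l 1 : Fin d → ℝ)) := by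
  refine ⟨fun x => a • (((1 : ℝ) / 2) •
      (x i • (x j • Emat k l + x k • Emat j l - x l • Emat j k))), fun x => ?_, fun s t => ?_,
      fun x => ?_⟩
  · exact (((((Emat_symm k l).smul (x j)).add ((Emat_symm j l).smul (x k))).sub
      ((Emat_symm j k).smul (x l))).smul (x i)).smul _ |>.smul a
  · refine ⟨MvPolynomial.C (a / 2 * Emat k l s t) * (MvPolynomial.X i * MvPolynomial.X j)
      + MvPolynomial.C (a / 2 * Emat j l s t) * (MvPolynomial.X i * MvPolynomial.X k)
      - MvPolynomial.C (a / 2 * Emat j k s t) * (MvPolynomial.X i * MvPolynomial.X l), ?_, ?_⟩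
    · exact ((((isHomogeneous_C _ _).mul ((isHomogeneous_X _ _).mul (isHomogeneous_X _ _))).add
        ((isHomogeneous_C _ _).mul ((isHomogeneous_X _ _).mul (isHomogeneous_X _ _)))).sub
        ((isHomogeneous_C _ _).mul ((isHomogeneous_X _ _).mul (isHomogeneous_X _ _))))
    · intro x
      simp only [Matrix.smul_apply, Matrix.add_apply, Matrix.sub_apply, smul_eq_mul,
        map_add, map_sub, _root_.map_mul, MvPolynomial.eval_C, MvPolynomial.eval_X]
      ring
  · rw [smul_mulVec, witness, smul_smul]

lemma InS_hom3 {d : ℕ} (l : Fin d) (P : MvPolynomial (Fin d) ℝ) (hP : P.IsHomogeneous 3) :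
    InS d (fun x => MvPolynomial.eval x P • (Pi.single l 1 : Fin d → ℝ)) := by
  have hfun : (fun x => MvPolynomial.eval x P • (Pi.single l 1 : Fin d → ℝ))
      = ∑ m ∈ P.support, fun x =>
          MvPolynomial.eval x (MvPolynomial.monomial m (MvPolynomial.coeff m P))
            • (Pi.single l 1 : Fin d → ℝ) := by
    funext x
    rw [Finset.sum_apply]
    rw [← Finset.sum_smul]
    congr 1
    rw [← map_sum, MvPolynomial.support_sum_monomial_coeff]
  rw [hfun]
  apply InS_sum
  intro m hm
  have hdeg : m.degree = 3 := by
    rw [Finsupp.degree_eq_weight_one]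
    exact hP (MvPolynomial.mem_support_iff.mp hm)
  obtain ⟨i, j, k, rfl⟩ := deg3 m hdeg
  have : (fun x => MvPolynomial.eval x (MvPolynomial.monomial
      (Finsupp.single i 1 + Finsupp.single j 1 + Finsupp.single k 1)
      (MvPolynomial.coeff (Finsupp.single i 1 + Finsupp.single j 1 + Finsupp.single k 1) P))
        • (Pi.single l 1 : Fin d → ℝ))
      = fun x => ((MvPolynomial.coeff (Finsupp.single i 1 + Finsupp.single j 1 + Finsupp.single k 1) P)
          * (x i * x j * x k)) • (Pi.single l 1 : Fin d → ℝ) := by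
    funext x
    rw [eval_mon3]
  rw [this]
  exact InS_gen _ i j k l


end Aux

/-- The linear map `T : D → E`, `(Tc)(x) = c(x) x`, from the space `D` of
maps `ℝ^d → S^d` with homogeneous degree-2 polynomial entries to the space `E` of maps
`ℝ^d → ℝ^d` with homogeneous degree-3 polynomial components, is surjective. In particular,
for all indices `i, j, k, l` the map `c(x) = x_i (x_j E_{kl} + x_k E_{jl} - x_l E_{jk})/2`
lies in `D` and satisfies `c(x) x = x_i x_j x_k e_l`. -/
theorem stmt5 (d : ℕ) (hd : 1 ≤ d) :
    -- surjectivity of `T`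
    (∀ f : (Fin d → ℝ) → (Fin d → ℝ),
      (∀ i, IsHomPolyFun d 3 (fun x => f x i)) →
      ∃ c : (Fin d → ℝ) → Matrix (Fin d) (Fin d) ℝ,
        (∀ x, (c x).IsSymm) ∧
        (∀ i j, IsHomPolyFun d 2 (fun x => c x i j)) ∧
        (∀ x, (c x).mulVec x = f x)) ∧
    -- the explicit witness
    (∀ i j k l : Fin d, ∀ x : Fin d → ℝ,
      (((1 : ℝ) / 2) • (x i • (x j • Emat k l + x k • Emat j l - x l • Emat j k))).mulVec x
        = (x i * x j * x k) • (Pi.single l 1 : Fin d → ℝ)) := by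
  constructor
  · intro f hf
    choose P hP hPe using hf
    have hfun : f = ∑ l : Fin d, fun x => MvPolynomial.eval x (P l) • (Pi.single l 1 : Fin d → ℝ) := by
      funext x r
      rw [Finset.sum_apply]
      simp only [Finset.sum_apply, Pi.smul_apply, Pi.single_apply, smul_eq_mul, mul_ite,
        mul_one, mul_zero]
      rw [Finset.sum_ite_eq Finset.univ r (fun l => MvPolynomial.eval x (P l))]
      simpa using hPe r x
    rw [hfun]
    exact InS_sum _ _ fun l _ => InS_hom3 l (P l) (hP l)
  · exact witness
end

section
/- Let d ≥ 1, m = binomial(d,2), and let c ∈ C. The following three conditions are equivalent: (i) the biquadratic form BQ(x,y) = y^⊤ c(x) y is a sum of squares of real polynomials in the variables (x,y); (ii) c = c_H for some positive semidefinite H ∈ S^m; (iii) c(x) = Σ_{p=1}^m A_p x x^⊤ A_p^⊤ for all x, for some skew-symmetric matrices A_1, …, A_m ∈ ℝ^{d×d}. -/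
open Matrix

open MvPolynomial


-- Lemma A: sum of squares of real mv-polynomials is zero iff each is zero
lemma sum_sq_eq_zero {σ : Type*} {n : ℕ} (r : Fin n → MvPolynomial σ ℝ)
    (h : ∑ k, r k ^ 2 = 0) : ∀ k, r k = 0 := by
  intro k
  apply MvPolynomial.funext
  intro x
  have hx : ∑ j, (MvPolynomial.eval x (r j)) ^ 2 = 0 := by
    have := congrArg (MvPolynomial.eval x) h
    simpa using this
  have := (Finset.sum_eq_zero_iff_of_nonneg (fun j _ => sq_nonneg _)).mp hx k (Finset.mem_univ k)
  simpa using pow_eq_zero_iff (n := 2) (by norm_num) |>.mp this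

noncomputable def Psi {σ : Type*} (w : σ → ℕ) :
    MvPolynomial σ ℝ →+* Polynomial (MvPolynomial σ ℝ) :=
  MvPolynomial.eval₂Hom (Polynomial.C.comp MvPolynomial.C)
    (fun s => Polynomial.C (MvPolynomial.X s) * Polynomial.X ^ w s)

lemma Psi_monomial {σ : Type*} (w : σ → ℕ) (d : σ →₀ ℕ) (a : ℝ) :
    Psi w (monomial d a) =
      Polynomial.C (monomial d a) * Polynomial.X ^ (Finsupp.weight w d) := by
  classical
  simp only [Psi, eval₂Hom_monomial]
  rw [Finsupp.prod]
  rw [Finset.prod_congr rfl (fun s _ => mul_pow (Polynomial.C (X s)) (Polynomial.X ^ w s) (d s))]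
  rw [Finset.prod_mul_distrib]
  simp only [← Polynomial.C_pow, ← map_prod, ← pow_mul]
  rw [Finset.prod_pow_eq_pow_sum]
  rw [MvPolynomial.monomial_eq, _root_.map_mul]
  rw [Finsupp.weight_apply, Finsupp.sum, Finsupp.prod]
  simp only [RingHom.comp_apply, smul_eq_mul, mul_assoc]
  congr 3
  exact Finset.sum_congr rfl fun s _ => Nat.mul_comm _ _


lemma coeff_coeff_Psi {σ : Type*} (w : σ → ℕ) (f : MvPolynomial σ ℝ) (j : ℕ) (d : σ →₀ ℕ) :
    MvPolynomial.coeff d ((Psi w f).coeff j) =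
      if Finsupp.weight w d = j then MvPolynomial.coeff d f else 0 := by
  classical
  induction f using MvPolynomial.induction_on' with
  | monomial u a =>
    rw [Psi_monomial]
    rw [Polynomial.coeff_C_mul, Polynomial.coeff_X_pow]
    simp only [mul_ite, mul_one, mul_zero, MvPolynomial.coeff_monomial]
    by_cases hud : u = d
    · subst hud
      · split_ifs with h1 h2 h2 <;>
        simp_all [MvPolynomial.coeff_monomial, eq_comm]
    · split_ifs <;> simp [MvPolynomial.coeff_monomial, hud]
  | add p q hp hq =>
    simp only [map_add, Polynomial.coeff_add, MvPolynomial.coeff_add, hp, hq]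
    split <;> simp

lemma eval_one_Psi {σ : Type*} (w : σ → ℕ) (f : MvPolynomial σ ℝ) :
    Polynomial.eval 1 (Psi w f) = f := by
  have : (Polynomial.evalRingHom (1 : MvPolynomial σ ℝ)).comp (Psi w) =
      RingHom.id (MvPolynomial σ ℝ) := by
    apply MvPolynomial.ringHom_ext
    · intro r; simp [Psi]
    · intro s; simp [Psi]
  exact congrArg (fun g => g f) this

lemma Psi_of_homog {σ : Type*} (w : σ → ℕ) {q : MvPolynomial σ ℝ} {n : ℕ}
    (hq : q.IsWeightedHomogeneous w n) :
    Psi w q = Polynomial.C q * Polynomial.X ^ n := by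
  classical
  ext j d
  rw [coeff_coeff_Psi]
  rw [Polynomial.coeff_C_mul, Polynomial.coeff_X_pow]
  by_cases hc : MvPolynomial.coeff d q = 0
  · split_ifs <;> simp [hc]
  · have := hq hc
    subst this
    split_ifs with h1 h2 h2
    · simp
    · exact absurd h1.symm h2
    · exact absurd h2.symm h1
    · simp





lemma homog_of_sum_sq {σ : Type*} (w : σ → ℕ) {n : ℕ} (f : Fin n → MvPolynomial σ ℝ)
    {q : MvPolynomial σ ℝ} (hq : q.IsWeightedHomogeneous w 2)
    (h : ∑ k, f k ^ 2 = q) : ∀ k, (f k).IsWeightedHomogeneous w 1 := by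
  classical
  rcases Nat.eq_zero_or_pos n with hn | hn
  · subst hn; exact fun k => k.elim0
  set g : Fin n → Polynomial (MvPolynomial σ ℝ) := fun k => Psi w (f k) with hg
  have hsum : ∑ k, g k ^ 2 = Polynomial.C q * Polynomial.X ^ 2 := by
    rw [← Psi_of_homog w hq, ← h, map_sum]
    exact Finset.sum_congr rfl fun k _ => (map_pow _ _ _).symm
  -- constant coefficient of each g k vanishes
  have h0 : ∀ k, (g k).coeff 0 = 0 := by
    apply sum_sq_eq_zero (fun k => (g k).coeff 0)
    have h1 := congrArg (fun p => Polynomial.coeff p 0) hsum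
    simp only [Polynomial.finset_sum_coeff, pow_two, Polynomial.mul_coeff_zero,
      Polynomial.coeff_X_pow] at h1
    simpa [← pow_two] using h1
  choose hh hhh using fun k => Polynomial.X_dvd_iff.mpr (h0 k)
  have hsum2 : ∑ k, hh k ^ 2 = Polynomial.C q := by
    have hx2 : (Polynomial.X : Polynomial (MvPolynomial σ ℝ)) ^ 2 ≠ 0 :=
      pow_ne_zero _ Polynomial.X_ne_zero
    apply mul_left_cancel₀ hx2
    calc Polynomial.X ^ 2 * ∑ k, hh k ^ 2 = ∑ k, (Polynomial.X * hh k) ^ 2 := by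
          rw [Finset.mul_sum]; exact Finset.sum_congr rfl fun k _ => by ring
      _ = ∑ k, g k ^ 2 := by
          exact Finset.sum_congr rfl fun k _ => by rw [← hhh k]
      _ = Polynomial.C q * Polynomial.X ^ 2 := hsum
      _ = Polynomial.X ^ 2 * Polynomial.C q := by ring
  -- each hh k is constant
  have hdeg : ∀ k, (hh k).natDegree = 0 := by
    by_contra hcon
    push_neg at hcon
    obtain ⟨k0, hk0⟩ := hcon
    set M := Finset.univ.sup (fun k => (hh k).natDegree) with hM
    have hle : ∀ k, (hh k).natDegree ≤ M := fun k =>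
      Finset.le_sup (f := fun k => (hh k).natDegree) (Finset.mem_univ k)
    have hM1 : 1 ≤ M := le_trans (Nat.one_le_iff_ne_zero.mpr hk0) (hle k0)
    have hcoeff : ∀ k, (hh k).coeff M = 0 := by
      apply sum_sq_eq_zero (fun k => (hh k).coeff M)
      have h1 := congrArg (fun p => Polynomial.coeff p (M + M)) hsum2
      simp only [Polynomial.finset_sum_coeff] at h1
      have h2 : ∀ k : Fin n, (hh k ^ 2).coeff (M + M) = ((hh k).coeff M) ^ 2 := by
        intro k
        rw [pow_two, Polynomial.coeff_mul]
        rw [Finset.sum_eq_single_of_mem (M, M) (Finset.HasAntidiagonal.mem_antidiagonal.mpr rfl)]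
        · rw [← pow_two]
        · rintro ⟨a, b⟩ hab hne
          have hab' := Finset.HasAntidiagonal.mem_antidiagonal.mp hab
          have : M < a ∨ M < b := by
            by_contra hc
            push_neg at hc
            exact hne (by simp at hab' ⊢; omega)
          rcases this with hlt | hlt
          · rw [Polynomial.coeff_eq_zero_of_natDegree_lt (lt_of_le_of_lt (hle k) hlt), zero_mul]
          · rw [Polynomial.coeff_eq_zero_of_natDegree_lt (lt_of_le_of_lt (hle k) hlt), mul_zero]
      rw [Finset.sum_congr rfl fun k _ => h2 k] at h1
      rw [h1, Polynomial.coeff_C, if_neg (by omega)]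
    obtain ⟨k, -, hk⟩ := Finset.exists_mem_eq_sup Finset.univ
      (Finset.univ_nonempty_iff.mpr ⟨⟨0, hn⟩⟩) (fun k => (hh k).natDegree)
    rw [← hM] at hk
    have hne : hh k ≠ 0 := by
      intro h0'
      rw [h0'] at hk
      simp at hk
      omega
    have : (hh k).coeff M ≠ 0 := by
      rw [hk]
      exact fun hcon => hne (Polynomial.leadingCoeff_eq_zero.mp hcon)
    exact this (hcoeff k)
  -- conclude
  intro k
  have hc := Polynomial.eq_C_of_natDegree_eq_zero (hdeg k)
  have hk : g k = Polynomial.C ((hh k).coeff 0) * Polynomial.X := by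
    conv_lhs => rw [hhh k, hc]
    exact mul_comm _ _
  intro d hd
  by_contra hw
  have h1 := coeff_coeff_Psi w (f k) (Finsupp.weight w d) d
  rw [if_pos rfl] at h1
  have h2 : (Psi w (f k)).coeff (Finsupp.weight w d) = 0 := by
    show (g k).coeff _ = 0
    rw [hk, Polynomial.coeff_C_mul, Polynomial.coeff_X, if_neg (fun hh => hw hh.symm), mul_zero]
  rw [h2] at h1
  exact hd h1.symm

lemma sum_eq_one_exists {α : Type*} [Fintype α] (g : α → ℕ) (h : ∑ a, g a = 1) :
    ∃ a, g a = 1 ∧ ∀ b, b ≠ a → g b = 0 := by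
  classical
  obtain ⟨a, -, ha⟩ := Finset.exists_ne_zero_of_sum_ne_zero (by rw [h]; exact one_ne_zero)
  have h2 : g a + ∑ b ∈ Finset.univ.erase a, g b = 1 := by
    rw [Finset.add_sum_erase _ g (Finset.mem_univ a)]; exact h
  have hga : g a = 1 := by omega
  have hrest : ∑ b ∈ Finset.univ.erase a, g b = 0 := by omega
  refine ⟨a, hga, fun b hb => ?_⟩
  exact (Finset.sum_eq_zero_iff).mp hrest b (Finset.mem_erase.mpr ⟨hb, Finset.mem_univ b⟩)

lemma weight_elim_l {d : ℕ} (g : Fin d ⊕ Fin d →₀ ℕ) :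
    Finsupp.weight (Sum.elim (fun _ => (1:ℕ)) (fun _ => 0)) g = ∑ j, g (Sum.inl j) := by
  rw [Finsupp.weight_apply, Finsupp.sum_fintype _ _ (fun s => by simp)]
  rw [Fintype.sum_sum_type]
  simp

lemma weight_elim_r {d : ℕ} (g : Fin d ⊕ Fin d →₀ ℕ) :
    Finsupp.weight (Sum.elim (fun _ => (0:ℕ)) (fun _ => 1)) g = ∑ i, g (Sum.inr i) := by
  rw [Finsupp.weight_apply, Finsupp.sum_fintype _ _ (fun s => by simp)]
  rw [Fintype.sum_sum_type]
  simp

/-- The bidegree-(1,1) monomial exponent. -/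
noncomputable def mexp {d : ℕ} (i j : Fin d) : Fin d ⊕ Fin d →₀ ℕ :=
  Finsupp.single (Sum.inl j) 1 + Finsupp.single (Sum.inr i) 1

lemma mexp_apply_inl {d : ℕ} (i j j' : Fin d) :
    mexp i j (Sum.inl j') = if j = j' then 1 else 0 := by
  simp [mexp, Finsupp.single_apply]

lemma mexp_apply_inr {d : ℕ} (i j i' : Fin d) :
    mexp i j (Sum.inr i') = if i = i' then 1 else 0 := by
  simp [mexp, Finsupp.single_apply]

lemma mexp_inj {d : ℕ} {i j i' j' : Fin d} (h : mexp i j = mexp i' j') :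
    i = i' ∧ j = j' := by
  constructor
  · have h1 := DFunLike.congr_fun h (Sum.inr i)
    rw [mexp_apply_inr, mexp_apply_inr, if_pos rfl] at h1
    by_contra hne
    rw [if_neg (fun hc => hne hc.symm)] at h1
    exact one_ne_zero h1
  · have h1 := DFunLike.congr_fun h (Sum.inl j)
    rw [mexp_apply_inl, mexp_apply_inl, if_pos rfl] at h1
    by_contra hne
    rw [if_neg (fun hc => hne hc.symm)] at h1
    exact one_ne_zero h1

lemma classify_mexp {d : ℕ} (g : Fin d ⊕ Fin d →₀ ℕ)
    (h1 : ∑ j, g (Sum.inl j) = 1) (h2 : ∑ i, g (Sum.inr i) = 1) :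
    ∃ i j, g = mexp i j := by
  obtain ⟨j0, hj0, hjrest⟩ := sum_eq_one_exists _ h1
  obtain ⟨i0, hi0, hirest⟩ := sum_eq_one_exists _ h2
  refine ⟨i0, j0, ?_⟩
  ext s
  rcases s with j | i
  · rw [mexp_apply_inl]
    by_cases hj : j0 = j
    · subst hj; simpa using hj0
    · rw [if_neg hj]; exact hjrest j (fun hc => hj hc.symm)
  · rw [mexp_apply_inr]
    by_cases hi : i0 = i
    · subst hi; simpa using hi0
    · rw [if_neg hi]; exact hirest i (fun hc => hi hc.symm)

lemma bilinear_of_homog {d : ℕ} (f : MvPolynomial (Fin d ⊕ Fin d) ℝ)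
    (hx : f.IsWeightedHomogeneous (Sum.elim (fun _ => 1) (fun _ => 0)) 1)
    (hy : f.IsWeightedHomogeneous (Sum.elim (fun _ => 0) (fun _ => 1)) 1) :
    ∃ B : Matrix (Fin d) (Fin d) ℝ, ∀ x y : Fin d → ℝ,
      MvPolynomial.eval (Sum.elim x y) f = y ⬝ᵥ B.mulVec x := by
  classical
  refine ⟨Matrix.of fun i j => MvPolynomial.coeff (mexp i j) f, ?_⟩
  have hf : f = ∑ p : Fin d × Fin d, monomial (mexp p.1 p.2) (MvPolynomial.coeff (mexp p.1 p.2) f) := by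
    ext d'
    rw [MvPolynomial.coeff_sum]
    by_cases hex : ∃ i j, d' = mexp i j
    · obtain ⟨i0, j0, rfl⟩ := hex
      rw [Finset.sum_eq_single (i0, j0)]
      · simp [MvPolynomial.coeff_monomial]
      · rintro ⟨i, j⟩ - hne
        rw [MvPolynomial.coeff_monomial, if_neg]
        intro hc
        obtain ⟨hi, hj⟩ := mexp_inj hc
        exact hne (Prod.ext hi hj)
      · intro hmem; exact absurd (Finset.mem_univ _) hmem
    · push_neg at hex
      have hz : MvPolynomial.coeff d' f = 0 := by
        by_contra hc
        have hwx := hx hc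
        have hwy := hy hc
        rw [weight_elim_l] at hwx
        rw [weight_elim_r] at hwy
        obtain ⟨i, j, hij⟩ := classify_mexp d' hwx hwy
        exact hex i j hij
      rw [hz]
      symm
      apply Finset.sum_eq_zero
      rintro ⟨i, j⟩ -
      rw [MvPolynomial.coeff_monomial, if_neg (fun hc => hex i j hc.symm)]
  intro x y
  conv_lhs => rw [hf]
  rw [map_sum]
  have heval : ∀ (i j : Fin d) (a : ℝ),
      MvPolynomial.eval (Sum.elim x y) (monomial (mexp i j) a) = a * (x j * y i) := by
    intro i j a
    rw [MvPolynomial.eval_monomial, mexp,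
      Finsupp.prod_add_index' (fun s => pow_zero _) (fun s m n => pow_add _ m n)]
    simp
  rw [Finset.sum_congr rfl (fun p _ => heval p.1 p.2 _)]
  rw [dotProduct, Fintype.sum_prod_type]
  apply Finset.sum_congr rfl
  intro i _
  simp only [Matrix.mulVec, dotProduct, Matrix.of_apply, Finset.mul_sum]
  apply Finset.sum_congr rfl
  intro j _
  ring

variable {d : ℕ}

lemma dot_single_mulVec_single (B : Matrix (Fin d) (Fin d) ℝ) (i j : Fin d) :
    (Pi.single i 1 : Fin d → ℝ) ⬝ᵥ B.mulVec (Pi.single j 1) = B i j := by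
  simp [Matrix.mulVec_single, single_dotProduct]

lemma skew_of_quadzero (B : Matrix (Fin d) (Fin d) ℝ)
    (h : ∀ x, x ⬝ᵥ B.mulVec x = 0) : Bᵀ = -B := by
  ext i j
  have h1 := h (Pi.single i 1)
  have h2 := h (Pi.single j 1)
  have h3 := h (Pi.single i 1 + Pi.single j 1)
  rw [Matrix.mulVec_add, add_dotProduct, dotProduct_add,
    dotProduct_add] at h3
  rw [dot_single_mulVec_single] at h1 h2
  rw [dot_single_mulVec_single, dot_single_mulVec_single, dot_single_mulVec_single,
    dot_single_mulVec_single] at h3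
  simp only [Matrix.transpose_apply, Matrix.neg_apply]
  linarith

lemma symm_quadzero_eq_zero (M : Matrix (Fin d) (Fin d) ℝ) (hs : Mᵀ = M)
    (h : ∀ y, y ⬝ᵥ M.mulVec y = 0) : M = 0 := by
  have h2 : Mᵀ = -M := skew_of_quadzero M h
  rw [hs] at h2
  ext i j
  have := congrFun (congrFun h2 i) j
  simp only [Matrix.neg_apply] at this
  simp only [Matrix.zero_apply]
  linarith

lemma vecMulVec_mulVec (x v : Fin d → ℝ) :
    (vecMulVec x x).mulVec v = (x ⬝ᵥ v) • x := by
  ext i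
  simp only [Matrix.mulVec, Matrix.vecMulVec_apply, dotProduct, Pi.smul_apply,
    smul_eq_mul, Finset.sum_mul]
  exact Finset.sum_congr rfl fun j _ => by ring

lemma quadform_sandwich (A : Matrix (Fin d) (Fin d) ℝ) (x y : Fin d → ℝ) :
    y ⬝ᵥ (A * vecMulVec x x * Aᵀ).mulVec y = (y ⬝ᵥ A.mulVec x) ^ 2 := by
  rw [← Matrix.mulVec_mulVec, ← Matrix.mulVec_mulVec, vecMulVec_mulVec,
    Matrix.mulVec_smul, dotProduct_smul]
  have hx : x ⬝ᵥ Aᵀ.mulVec y = y ⬝ᵥ A.mulVec x := by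
    rw [Matrix.dotProduct_mulVec, Matrix.vecMul_transpose, dotProduct_comm]
  rw [hx, smul_eq_mul, ← pow_two]

lemma gram_expand {ι κ : Type*} [Fintype ι] [Fintype κ] (v : ι → κ → ℝ)
    (D : κ → Matrix (Fin d) (Fin d) ℝ) (X : Matrix (Fin d) (Fin d) ℝ) :
    ∑ p : κ, ∑ q : κ, (∑ k : ι, v k p * v k q) • (D p * X * (D q)ᵀ) =
      ∑ k : ι, (∑ p : κ, v k p • D p) * X * (∑ p : κ, v k p • D p)ᵀ := by
  have hrhs : ∀ k : ι, (∑ p : κ, v k p • D p) * X * (∑ p : κ, v k p • D p)ᵀ =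
      ∑ p : κ, ∑ q : κ, (v k p * v k q) • (D p * X * (D q)ᵀ) := by
    intro k
    rw [Matrix.transpose_sum]
    simp only [Matrix.transpose_smul]
    rw [Finset.sum_mul, Finset.sum_mul]
    apply Finset.sum_congr rfl
    intro p _
    rw [Finset.mul_sum]
    apply Finset.sum_congr rfl
    intro q _
    rw [smul_mul_assoc, smul_mul_assoc, Matrix.mul_smul, smul_smul]
  have e1 : ∀ p : κ, ∑ q : κ, (∑ k : ι, v k p * v k q) • (D p * X * (D q)ᵀ)
      = ∑ k : ι, ∑ q : κ, (v k p * v k q) • (D p * X * (D q)ᵀ) := by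
    intro p
    calc ∑ q : κ, (∑ k : ι, v k p * v k q) • (D p * X * (D q)ᵀ)
        = ∑ q : κ, ∑ k : ι, (v k p * v k q) • (D p * X * (D q)ᵀ) :=
          Finset.sum_congr rfl fun q _ => Finset.sum_smul
      _ = ∑ k : ι, ∑ q : κ, (v k p * v k q) • (D p * X * (D q)ᵀ) := Finset.sum_comm
  calc ∑ p : κ, ∑ q : κ, (∑ k : ι, v k p * v k q) • (D p * X * (D q)ᵀ)
      = ∑ p : κ, ∑ k : ι, ∑ q : κ, (v k p * v k q) • (D p * X * (D q)ᵀ) :=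
        Finset.sum_congr rfl fun p _ => e1 p
    _ = ∑ k : ι, ∑ p : κ, ∑ q : κ, (v k p * v k q) • (D p * X * (D q)ᵀ) := Finset.sum_comm
    _ = ∑ k : ι, (∑ p : κ, v k p • D p) * X * (∑ p : κ, v k p • D p)ᵀ :=
        Finset.sum_congr rfl fun k _ => (hrhs k).symm

lemma dot_gram {ι κ : Type*} [Fintype ι] [Fintype κ] (v : ι → κ → ℝ) (u : κ → ℝ) :
    u ⬝ᵥ (Matrix.of fun p q => ∑ k : ι, v k p * v k q).mulVec u =
      ∑ k : ι, (v k ⬝ᵥ u) ^ 2 := by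
  calc u ⬝ᵥ (Matrix.of fun p q => ∑ k : ι, v k p * v k q).mulVec u
      = ∑ p : κ, ∑ q : κ, ∑ k : ι, u p * v k p * v k q * u q := by
        simp only [dotProduct, Matrix.mulVec, Matrix.of_apply]
        refine Finset.sum_congr rfl fun p _ => ?_
        rw [Finset.mul_sum]
        refine Finset.sum_congr rfl fun q _ => ?_
        rw [Finset.sum_mul, Finset.mul_sum]
        exact Finset.sum_congr rfl fun k _ => by ring
    _ = ∑ p : κ, ∑ k : ι, ∑ q : κ, u p * v k p * v k q * u q :=
        Finset.sum_congr rfl fun p _ => Finset.sum_comm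
    _ = ∑ k : ι, ∑ p : κ, ∑ q : κ, u p * v k p * v k q * u q := Finset.sum_comm
    _ = ∑ k : ι, (v k ⬝ᵥ u) ^ 2 := by
        refine Finset.sum_congr rfl fun k _ => ?_
        rw [pow_two, dotProduct, Finset.sum_mul]
        refine Finset.sum_congr rfl fun p _ => ?_
        rw [Finset.mul_sum]
        exact Finset.sum_congr rfl fun q _ => by ring


lemma stdBasis_transpose {d : ℕ} (i j : Fin d) (a : ℝ) :
    (Matrix.single i j a)ᵀ = Matrix.single j i a := by
  ext i' j'
  simp only [Matrix.transpose_apply, Matrix.single, Matrix.of_apply]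
  by_cases h1 : i = j' <;> by_cases h2 : j = i' <;> simp [h1, h2, and_comm]

lemma skewBasis_transpose {d : ℕ} (p : PairIdx d) : (skewBasis p)ᵀ = -skewBasis p := by
  unfold skewBasis
  rw [Matrix.transpose_sub, stdBasis_transpose, stdBasis_transpose, neg_sub]

lemma skewBasis_apply {d : ℕ} (p : PairIdx d) (i j : Fin d) :
    skewBasis p i j = (if p.1.1 = i ∧ p.1.2 = j then (1:ℝ) else 0) -
      (if p.1.2 = i ∧ p.1.1 = j then 1 else 0) := by
  simp [skewBasis, Matrix.single, Matrix.sub_apply]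

lemma skew_decomp {d : ℕ} (A : Matrix (Fin d) (Fin d) ℝ) (h : Aᵀ = -A) :
    A = ∑ p : PairIdx d, A p.1.1 p.1.2 • skewBasis p := by
  classical
  have hskew : ∀ i j, A j i = -A i j := fun i j => by simpa using congrFun (congrFun h i) j
  have hdiag : ∀ i, A i i = 0 := fun i => by have := hskew i i; linarith
  ext i j
  rw [Matrix.sum_apply]
  simp only [Matrix.smul_apply, skewBasis_apply, smul_eq_mul]
  rcases lt_trichotomy i j with hij | hij | hij
  · rw [Finset.sum_eq_single (⟨(i, j), hij⟩ : PairIdx d)]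
    · show A i j = A i j * ((if i = i ∧ j = j then (1:ℝ) else 0) - if j = i ∧ i = j then 1 else 0)
      rw [if_pos ⟨rfl, rfl⟩, if_neg (by rintro ⟨h1', -⟩; rw [h1'] at hij; exact lt_irrefl i hij)]
      ring
    · rintro ⟨⟨a, b⟩, hab⟩ - hne
      have h2 : ¬(b = i ∧ a = j) := by
        rintro ⟨rfl, rfl⟩
        exact absurd hij (not_lt.mpr (le_of_lt hab))
      have h1 : ¬(a = i ∧ b = j) := by
        rintro ⟨rfl, rfl⟩
        exact hne rfl
      rw [if_neg h1, if_neg h2]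
      ring
    · intro hmem; exact absurd (Finset.mem_univ _) hmem
  · subst hij
    rw [hdiag i]
    symm
    apply Finset.sum_eq_zero
    rintro ⟨⟨a, b⟩, hab⟩ -
    have h1 : ¬(a = i ∧ b = i) := by
      rintro ⟨ha, hb⟩
      rw [ha, hb] at hab
      exact absurd hab (lt_irrefl i)
    have h2 : ¬(b = i ∧ a = i) := by
      rintro ⟨hb, ha⟩
      rw [ha, hb] at hab
      exact absurd hab (lt_irrefl i)
    rw [if_neg h1, if_neg h2]
    ring
  · rw [Finset.sum_eq_single (⟨(j, i), hij⟩ : PairIdx d)]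
    · show A i j = A j i * ((if j = i ∧ i = j then (1:ℝ) else 0) - if i = i ∧ j = j then 1 else 0)
      rw [if_neg (by rintro ⟨h1', -⟩; rw [h1'] at hij; exact lt_irrefl i hij), if_pos ⟨rfl, rfl⟩, hskew j i]
      ring
    · rintro ⟨⟨a, b⟩, hab⟩ - hne
      have h1 : ¬(a = i ∧ b = j) := by
        rintro ⟨rfl, rfl⟩
        exact absurd hij (not_lt.mpr (le_of_lt hab))
      have h2 : ¬(b = i ∧ a = j) := by
        rintro ⟨rfl, rfl⟩
        exact hne rfl
      rw [if_neg h1, if_neg h2]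
      ring
    · intro hmem; exact absurd (Finset.mem_univ _) hmem

variable {d : ℕ}

/-- polynomial (x,y) ↦ yᵀ B x -/
noncomputable def polyBilin (B : Matrix (Fin d) (Fin d) ℝ) : MvPolynomial (Fin d ⊕ Fin d) ℝ :=
  ∑ i : Fin d, ∑ j : Fin d, MvPolynomial.C (B i j) * X (Sum.inr i) * X (Sum.inl j)

lemma eval_polyBilin (B : Matrix (Fin d) (Fin d) ℝ) (x y : Fin d → ℝ) :
    MvPolynomial.eval (Sum.elim x y) (polyBilin B) = y ⬝ᵥ B.mulVec x := by
  simp only [polyBilin, map_sum, dotProduct, Matrix.mulVec, Finset.mul_sum]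
  refine Finset.sum_congr rfl fun i _ => Finset.sum_congr rfl fun j _ => ?_
  simp only [_root_.map_mul, eval_C, eval_X, Sum.elim_inl, Sum.elim_inr]
  ring

/-- the biquadratic polynomial q from the entries of c -/
noncomputable def qpoly (P : Fin d → Fin d → MvPolynomial (Fin d) ℝ) :
    MvPolynomial (Fin d ⊕ Fin d) ℝ :=
  ∑ i : Fin d, ∑ j : Fin d,
    (rename Sum.inl (P i j)) * X (Sum.inr i) * X (Sum.inr j)

lemma eval_qpoly (P : Fin d → Fin d → MvPolynomial (Fin d) ℝ) (x y : Fin d → ℝ) :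
    MvPolynomial.eval (Sum.elim x y) (qpoly P) =
      ∑ i : Fin d, ∑ j : Fin d, MvPolynomial.eval x (P i j) * y i * y j := by
  simp only [qpoly, map_sum]
  refine Finset.sum_congr rfl fun i _ => Finset.sum_congr rfl fun j _ => ?_
  simp only [_root_.map_mul, eval_X, Sum.elim_inr, eval_rename]
  rw [show Sum.elim x y ∘ Sum.inl = x from funext fun j => rfl]

lemma rename_inl_homog_y (P : MvPolynomial (Fin d) ℝ) :
    (rename Sum.inl P : MvPolynomial (Fin d ⊕ Fin d) ℝ).IsWeightedHomogeneous
      (Sum.elim (fun _ => 0) (fun _ => 1)) 0 := by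
  intro dd hc
  obtain ⟨u, rfl, -⟩ := coeff_rename_ne_zero _ _ _ hc
  rw [Finsupp.weight_apply, Finsupp.sum_fintype _ _ (fun s => by simp),
    Fintype.sum_sum_type]
  have hz : ∀ i : Fin d, (Finsupp.mapDomain Sum.inl u) (Sum.inr i) = 0 := fun i =>
    Finsupp.mapDomain_notin_range u (Sum.inr i) (by rintro ⟨a, ha⟩; exact Sum.inl_ne_inr ha)
  simp [hz]

lemma rename_inl_homog_x {n : ℕ} (P : MvPolynomial (Fin d) ℝ) (hP : P.IsHomogeneous n) :
    (rename Sum.inl P : MvPolynomial (Fin d ⊕ Fin d) ℝ).IsWeightedHomogeneous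
      (Sum.elim (fun _ => 1) (fun _ => 0)) n := by
  intro dd hc
  obtain ⟨u, rfl, hu⟩ := coeff_rename_ne_zero _ _ _ hc
  have hw := hP hu
  rw [Finsupp.weight_apply, Finsupp.sum_fintype _ _ (fun s => by simp),
    Fintype.sum_sum_type]
  simp only [Sum.elim_inl, Sum.elim_inr, smul_eq_mul, mul_one, mul_zero, Finset.sum_const_zero,
    add_zero]
  have hmap : ∀ j : Fin d, (Finsupp.mapDomain (Sum.inl : Fin d → Fin d ⊕ Fin d) u) (Sum.inl j) = u j :=
    fun j => Finsupp.mapDomain_apply Sum.inl_injective u j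
  rw [Finset.sum_congr rfl fun j _ => hmap j]
  -- now need: ∑ j, u j = n from hP
  rw [← hw]
  rw [Finsupp.weight_apply, Finsupp.sum_fintype _ _ (fun s => by simp)]
  simp

lemma vecMulVec_symm {d : ℕ} (x : Fin d → ℝ) : (vecMulVec x x)ᵀ = vecMulVec x x := by
  ext i j
  simp [Matrix.vecMulVec_apply, mul_comm]

lemma dot_sum_mulVec {d : ℕ} {ι : Type*} (s : Finset ι) (M : ι → Matrix (Fin d) (Fin d) ℝ)
    (y z : Fin d → ℝ) :
    y ⬝ᵥ (∑ k ∈ s, M k).mulVec z = ∑ k ∈ s, y ⬝ᵥ (M k).mulVec z := by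
  classical
  induction s using Finset.induction_on with
  | empty => simp
  | insert _ _ hk ih =>
      rw [Finset.sum_insert hk, Finset.sum_insert hk, Matrix.add_mulVec,
        dotProduct_add, ih]

lemma dot_mulVec_expand {d : ℕ} (M : Matrix (Fin d) (Fin d) ℝ) (y : Fin d → ℝ) :
    y ⬝ᵥ M.mulVec y = ∑ i, ∑ j, M i j * y i * y j := by
  simp only [dotProduct, Matrix.mulVec, Finset.mul_sum]
  exact Finset.sum_congr rfl fun i _ => Finset.sum_congr rfl fun j _ => by ring

/-- For `c ∈ C` (symmetric homogeneous degree-2 entries, `c(x)x = 0`) the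
following are equivalent: (i) the biquadratic form `yᵀ c(x) y` is a sum of squares of real
polynomials in `(x,y)`; (ii) `c = c_H` for some positive semidefinite symmetric `H ∈ S^m`;
(iii) `c(x) = ∑_{p=1}^m A_p x xᵀ A_pᵀ` for some skew-symmetric `A_1, …, A_m`. -/
theorem stmt6 (d : ℕ) (hd : 1 ≤ d)
    (c : (Fin d → ℝ) → Matrix (Fin d) (Fin d) ℝ)
    (hsymm : ∀ x, (c x).IsSymm)
    (hhom : ∀ i j, IsHomPolyFun d 2 (fun x => c x i j))
    (hker : ∀ x, (c x).mulVec x = 0) :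
    -- (i) ↔ (ii)
    ((∃ (n : ℕ) (f : Fin n → MvPolynomial (Fin d ⊕ Fin d) ℝ),
        ∀ x y : Fin d → ℝ,
          y ⬝ᵥ (c x).mulVec y = ∑ k, (MvPolynomial.eval (Sum.elim x y) (f k)) ^ 2) ↔
      (∃ H : Matrix (PairIdx d) (PairIdx d) ℝ,
        H.IsSymm ∧ (∀ u : PairIdx d → ℝ, 0 ≤ u ⬝ᵥ H.mulVec u) ∧ ∀ x, c x = cH H x)) ∧
    -- (ii) ↔ (iii)
    ((∃ H : Matrix (PairIdx d) (PairIdx d) ℝ,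
        H.IsSymm ∧ (∀ u : PairIdx d → ℝ, 0 ≤ u ⬝ᵥ H.mulVec u) ∧ ∀ x, c x = cH H x) ↔
      (∃ A : PairIdx d → Matrix (Fin d) (Fin d) ℝ,
        (∀ p, (A p)ᵀ = -(A p)) ∧
        ∀ x, c x = ∑ p : PairIdx d, A p * Matrix.vecMulVec x x * (A p)ᵀ)) := by
  classical
  -- (iii') implies (ii), with arbitrary finite index type
  have h_iii'_ii : ∀ (ι : Type) (hι : Fintype ι) (B : ι → Matrix (Fin d) (Fin d) ℝ),
      (∀ k, (B k)ᵀ = -(B k)) → (∀ x, c x = ∑ k, B k * vecMulVec x x * (B k)ᵀ) →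
      ∃ H : Matrix (PairIdx d) (PairIdx d) ℝ,
        H.IsSymm ∧ (∀ u : PairIdx d → ℝ, 0 ≤ u ⬝ᵥ H.mulVec u) ∧ ∀ x, c x = cH H x := by
    intro ι hι B hBskew hBc
    refine ⟨Matrix.of fun p q => ∑ k, B k p.1.1 p.1.2 * B k q.1.1 q.1.2, ?_, ?_, ?_⟩
    · apply Matrix.IsSymm.ext
      intro p q
      simp only [Matrix.of_apply]
      exact Finset.sum_congr rfl fun k _ => mul_comm _ _
    · intro u
      have hdg := dot_gram (fun k (p : PairIdx d) => B k p.1.1 p.1.2) u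
      rw [hdg]
      exact Finset.sum_nonneg fun k _ => sq_nonneg _
    · intro x
      rw [hBc x]
      unfold cH
      simp only [Matrix.of_apply]
      have hge := gram_expand (fun k (p : PairIdx d) => B k p.1.1 p.1.2) skewBasis
        (vecMulVec x x)
      rw [hge]
      refine Finset.sum_congr rfl fun k _ => ?_
      rw [← skew_decomp (B k) (hBskew k)]
  -- (ii) implies (iii)
  have h_ii_iii : (∃ H : Matrix (PairIdx d) (PairIdx d) ℝ,
        H.IsSymm ∧ (∀ u : PairIdx d → ℝ, 0 ≤ u ⬝ᵥ H.mulVec u) ∧ ∀ x, c x = cH H x) →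
      (∃ A : PairIdx d → Matrix (Fin d) (Fin d) ℝ,
        (∀ p, (A p)ᵀ = -(A p)) ∧
        ∀ x, c x = ∑ p : PairIdx d, A p * Matrix.vecMulVec x x * (A p)ᵀ) := by
    rintro ⟨H, hHs, hHpsd, hHc⟩
    have hherm : H.IsHermitian := by
      show Hᴴ = H
      rw [Matrix.conjTranspose_eq_transpose_of_trivial]
      exact hHs
    have hpsd : H.PosSemidef :=
        Matrix.PosSemidef.of_dotProduct_mulVec_nonneg hherm (fun u => by simpa using hHpsd u)
    obtain ⟨B, hB⟩ : ∃ B : Matrix (PairIdx d) (PairIdx d) ℝ, H = Bᴴ * B := by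
        open scoped MatrixOrder Matrix.Norms.L2Operator in
        obtain ⟨B, hB⟩ := CStarAlgebra.nonneg_iff_eq_star_mul_self.mp hpsd.nonneg
        exact ⟨B, hB⟩
    refine ⟨fun k => ∑ p, B k p • skewBasis p, ?_, ?_⟩
    · intro k
      rw [Matrix.transpose_sum]
      simp [Matrix.transpose_smul, skewBasis_transpose, smul_neg]
    · intro x
      rw [hHc x]
      unfold cH
      have hHpq : ∀ p q : PairIdx d, H p q = ∑ k, B k p * B k q := by
        intro p q
        rw [hB, Matrix.mul_apply]
        exact Finset.sum_congr rfl fun k _ => by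
          rw [Matrix.conjTranspose_apply, star_trivial]
      rw [Finset.sum_congr rfl fun p (_ : p ∈ Finset.univ) =>
        Finset.sum_congr rfl fun q (_ : q ∈ Finset.univ) => by rw [hHpq p q]]
      exact gram_expand (fun k p => B k p) skewBasis (vecMulVec x x)
  -- (iii) implies (i)
  have h_iii_i : (∃ A : PairIdx d → Matrix (Fin d) (Fin d) ℝ,
        (∀ p, (A p)ᵀ = -(A p)) ∧
        ∀ x, c x = ∑ p : PairIdx d, A p * Matrix.vecMulVec x x * (A p)ᵀ) →
      (∃ (n : ℕ) (f : Fin n → MvPolynomial (Fin d ⊕ Fin d) ℝ),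
        ∀ x y : Fin d → ℝ,
          y ⬝ᵥ (c x).mulVec y = ∑ k, (MvPolynomial.eval (Sum.elim x y) (f k)) ^ 2) := by
    rintro ⟨A, hAskew, hAc⟩
    refine ⟨Fintype.card (PairIdx d),
      fun k => polyBilin (A ((Fintype.equivFin (PairIdx d)).symm k)), ?_⟩
    intro x y
    rw [hAc x]
    calc y ⬝ᵥ (∑ p : PairIdx d, A p * vecMulVec x x * (A p)ᵀ).mulVec y
        = ∑ p : PairIdx d, y ⬝ᵥ (A p * vecMulVec x x * (A p)ᵀ).mulVec y :=
          dot_sum_mulVec _ _ _ _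
      _ = ∑ p : PairIdx d, (y ⬝ᵥ (A p).mulVec x) ^ 2 :=
          Finset.sum_congr rfl fun p _ => quadform_sandwich (A p) x y
      _ = ∑ k : Fin (Fintype.card (PairIdx d)),
            (y ⬝ᵥ (A ((Fintype.equivFin (PairIdx d)).symm k)).mulVec x) ^ 2 :=
          (Equiv.sum_comp (Fintype.equivFin (PairIdx d)).symm
            (fun p => (y ⬝ᵥ (A p).mulVec x) ^ 2)).symm
      _ = ∑ k : Fin (Fintype.card (PairIdx d)),
            (MvPolynomial.eval (Sum.elim x y)
              (polyBilin (A ((Fintype.equivFin (PairIdx d)).symm k)))) ^ 2 :=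
          Finset.sum_congr rfl fun k _ => by rw [eval_polyBilin]
  -- (i) implies (iii')
  have h_i_iii' : (∃ (n : ℕ) (f : Fin n → MvPolynomial (Fin d ⊕ Fin d) ℝ),
        ∀ x y : Fin d → ℝ,
          y ⬝ᵥ (c x).mulVec y = ∑ k, (MvPolynomial.eval (Sum.elim x y) (f k)) ^ 2) →
      ∃ (n : ℕ) (B : Fin n → Matrix (Fin d) (Fin d) ℝ),
        (∀ k, (B k)ᵀ = -(B k)) ∧ ∀ x, c x = ∑ k, B k * vecMulVec x x * (B k)ᵀ := by
    rintro ⟨n, f, hf⟩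
    choose P hPhom hPev using hhom
    have heq : ∑ k, f k ^ 2 = qpoly P := by
      apply MvPolynomial.funext
      intro z
      have hz : z = Sum.elim (z ∘ Sum.inl) (z ∘ Sum.inr) := funext fun s => by cases s <;> rfl
      rw [map_sum]
      calc ∑ k, MvPolynomial.eval z (f k ^ 2)
          = ∑ k, MvPolynomial.eval (Sum.elim (z ∘ Sum.inl) (z ∘ Sum.inr)) (f k) ^ 2 := by
            rw [← hz]
            exact Finset.sum_congr rfl fun k _ => by rw [map_pow]
        _ = (z ∘ Sum.inr) ⬝ᵥ (c (z ∘ Sum.inl)).mulVec (z ∘ Sum.inr) := (hf _ _).symm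
        _ = ∑ i, ∑ j, c (z ∘ Sum.inl) i j * (z ∘ Sum.inr) i * (z ∘ Sum.inr) j :=
            dot_mulVec_expand _ _
        _ = ∑ i, ∑ j, MvPolynomial.eval (z ∘ Sum.inl) (P i j) * (z ∘ Sum.inr) i
              * (z ∘ Sum.inr) j :=
            Finset.sum_congr rfl fun i _ => Finset.sum_congr rfl fun j _ => by
              rw [show c (z ∘ Sum.inl) i j = MvPolynomial.eval (z ∘ Sum.inl) (P i j) from
                hPev i j (z ∘ Sum.inl)]
        _ = MvPolynomial.eval (Sum.elim (z ∘ Sum.inl) (z ∘ Sum.inr)) (qpoly P) :=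
            (eval_qpoly P _ _).symm
        _ = MvPolynomial.eval z (qpoly P) := by rw [← hz]
    have hqx : (qpoly P).IsWeightedHomogeneous (Sum.elim (fun _ => 1) (fun _ => 0)) 2 := by
      apply MvPolynomial.IsWeightedHomogeneous.sum
      intro i _
      apply MvPolynomial.IsWeightedHomogeneous.sum
      intro j _
      exact ((rename_inl_homog_x (P i j) (hPhom i j)).mul
        (MvPolynomial.isWeightedHomogeneous_X ℝ _ (Sum.inr i))).mul
        (MvPolynomial.isWeightedHomogeneous_X ℝ _ (Sum.inr j))
    have hqy : (qpoly P).IsWeightedHomogeneous (Sum.elim (fun _ => 0) (fun _ => 1)) 2 := by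
      apply MvPolynomial.IsWeightedHomogeneous.sum
      intro i _
      apply MvPolynomial.IsWeightedHomogeneous.sum
      intro j _
      exact ((rename_inl_homog_y (P i j)).mul
        (MvPolynomial.isWeightedHomogeneous_X ℝ _ (Sum.inr i))).mul
        (MvPolynomial.isWeightedHomogeneous_X ℝ _ (Sum.inr j))
    have hfx := homog_of_sum_sq _ f hqx heq
    have hfy := homog_of_sum_sq _ f hqy heq
    choose B hB using fun k => bilinear_of_homog (f k) (hfx k) (hfy k)
    have hquadzero : ∀ k (x : Fin d → ℝ), x ⬝ᵥ (B k).mulVec x = 0 := by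
      intro k x
      have h1 := hf x x
      rw [hker x, dotProduct_zero] at h1
      have h2 : ∑ k', (x ⬝ᵥ (B k').mulVec x) ^ 2 = 0 := by
        rw [show ∑ k', (x ⬝ᵥ (B k').mulVec x) ^ 2
            = ∑ k', MvPolynomial.eval (Sum.elim x x) (f k') ^ 2 from
          Finset.sum_congr rfl fun k' _ => by rw [← hB k' x x]]
        exact h1.symm
      have h3 := (Finset.sum_eq_zero_iff_of_nonneg fun k' _ => sq_nonneg _).mp h2 k
        (Finset.mem_univ k)
      exact (pow_eq_zero_iff (two_ne_zero)).mp h3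
    refine ⟨n, B, fun k => skew_of_quadzero (B k) (hquadzero k), ?_⟩
    intro x
    have hM := symm_quadzero_eq_zero (c x - ∑ k, B k * vecMulVec x x * (B k)ᵀ) ?_ ?_
    · exact sub_eq_zero.mp hM
    · rw [Matrix.transpose_sub, Matrix.transpose_sum, (hsymm x).eq]
      congr 1
      refine Finset.sum_congr rfl fun k _ => ?_
      simp [Matrix.transpose_mul, Matrix.transpose_transpose, vecMulVec_symm, Matrix.mul_assoc]
    · intro y
      rw [Matrix.sub_mulVec, dotProduct_sub, dot_sum_mulVec, hf x y]
      have e2 : ∑ k, y ⬝ᵥ (B k * vecMulVec x x * (B k)ᵀ).mulVec y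
          = ∑ k, MvPolynomial.eval (Sum.elim x y) (f k) ^ 2 :=
        Finset.sum_congr rfl fun k _ => by rw [quadform_sandwich, ← hB k x y]
      rw [e2, sub_self]
  constructor
  · constructor
    · intro hi
      obtain ⟨n, B, hBskew, hBc⟩ := h_i_iii' hi
      exact h_iii'_ii (Fin n) inferInstance B hBskew hBc
    · intro hii
      exact h_iii_i (h_ii_iii hii)
  · constructor
    · exact h_ii_iii
    · rintro ⟨A, hAskew, hAc⟩
      exact h_iii'_ii (PairIdx d) inferInstance A hAskew hAc
end
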